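/- arXiv:1310.0530 — 6 statements merged into one kernel-verified Lean document; each statement's English description precedes it below -/
import Mathlib

section
/- (i) For S ∈ R, the upper-triangular lifting matrix υ(S) satisfies σ(υ(S)) = Λ·υ(S)·Λ⁻¹ if and only if σS = z·S (the lifting filter is half-sample symmetric about 1/2). (ii) The lower-triangular lifting matrix λ(S) satisfies σ(λ(S)) = Λ·λ(S)·Λ⁻¹ if and only if σS = z⁻¹·S (half-sample symmetric about −1/2). (iii) If H ∈ SL(2,R) satisfies σH = Λ·H·Λ⁻¹ and 𝐒 is a lifting matrix, then the product 𝐒·H satisfies σ(𝐒·H) = Λ·(𝐒·H)·Λ⁻¹ if and only if 𝐒 satisfies σ𝐒 = Λ·𝐒·Λ⁻¹. -/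
open LaurentPolynomial Matrix

noncomputable section

/-- `R` = the ring `ℝ[z,z⁻¹]` of Laurent polynomials with real coefficients. -/
abbrev R2 := LaurentPolynomial ℝ

/-- 2×2 matrices over `R`. -/
abbrev M2 := Matrix (Fin 2) (Fin 2) R2

/-- `SL(2,R)`. -/
abbrev SL2 := Matrix.SpecialLinearGroup (Fin 2) R2

/-- The ℝ-algebra involution `σ` determined by `σ(z) = z⁻¹`. -/
def σ : R2 ≃ₐ[ℝ] R2 := LaurentPolynomial.invert

/-- Entrywise application of `σ` to a matrix; plays the role of `H(z⁻¹)`. -/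
def mσ (H : M2) : M2 := H.map fun f => σ f

/-- `Λ = diag(1, z⁻¹)`. -/
def Λm : M2 := Matrix.diagonal ![1, T (-1)]

/-- `Λ⁻¹ = diag(1, z)`. -/
def Λim : M2 := Matrix.diagonal ![1, T 1]

/-- `L = diag(1, -1)`. -/
def Lm : M2 := Matrix.diagonal ![1, -1]

/-- `J = [[0,1],[1,0]]`. -/
def Jm : M2 := !![0, 1; 1, 0]

/-- Upper-triangular lifting matrix `υ(S) = [[1,S],[0,1]]`. -/
def umat (S : R2) : M2 := !![1, S; 0, 1]

/-- Lower-triangular lifting matrix `λ(S) = [[1,0],[S,1]]`. -/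
def lmat (S : R2) : M2 := !![1, 0; S, 1]

/-- Unimodular gain-scaling matrix `D_K = diag(1/K, K)`. -/
def DKm (K : ℝ) : M2 := Matrix.diagonal ![C K⁻¹, C K]

/-- Conjugation `γ_K(A) = D_K · A · D_K⁻¹`. -/
def γm (K : ℝ) (A : M2) : M2 := DKm K * A * (DKm K)⁻¹

/-- Substitution `z ↦ z²` on Laurent polynomials. -/
def sub2 : R2 →ₐ[ℝ] R2 :=
  AddMonoidAlgebra.mapDomainAlgHom ℝ ℝ
    (AddMonoidHom.mk' (fun n : ℤ => 2 * n) (by intro a b; ring))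

/-- The scalar filter `H_i(z) = H_{i0}(z²) + z·H_{i1}(z²)` of row `i` of `H`. -/
def scal (H : M2) (i : Fin 2) : R2 := sub2 (H i 0) + T 1 * sub2 (H i 1)

/-- Order of a (nonzero) Laurent polynomial: largest minus smallest exponent
with nonzero coefficient. -/
def lorder (f : R2) : ℤ := f.coeff.support.max.unbotD 0 - f.coeff.support.min.untopD 0

/-- Evaluation of a Laurent polynomial at a (nonzero) real number. -/
def lev (x : ℝ) (f : R2) : ℝ := f.coeff.sum fun n a => a * x ^ n

/-- Combined support (in the exponent variable) of all entries of a matrix. -/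
def msupp (H : M2) : Finset ℤ :=
  Finset.univ.biUnion fun p : Fin 2 × Fin 2 => (H p.1 p.2).coeff.support

/-- Polyphase order of a (nonzero) matrix Laurent polynomial `H = Σ h(n) z⁻ⁿ`:
`d - c` where `[c,d]` is the smallest interval with `h(c) ≠ 0 ≠ h(d)`. -/
def morder (H : M2) : ℤ := (msupp H).max.unbotD 0 - (msupp H).min.untopD 0

/-- The product `S_{N-1} ⋯ S_1 · S_0`. -/
def prodRev {M : Type*} [Monoid M] {N : ℕ} (SS : Fin N → M) : M :=
  ((List.ofFn SS).reverse).prod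

/-- Partial products: `partialE SS B (n+1) = S_n ⋯ S_0 · B` and `partialE SS B 0 = B`. -/
def partialE {M : Type*} [Monoid M] {N : ℕ} (SS : Fin N → M) (B : M) : ℕ → M
  | 0 => B
  | n + 1 => (if h : n < N then SS ⟨n, h⟩ else 1) * partialE SS B n

/-- `A` is an upper-triangular lifting matrix. -/
def IsUpper (A : M2) : Prop := ∃ S : R2, A = umat S

/-- `A` is a lower-triangular lifting matrix. -/
def IsLower (A : M2) : Prop := ∃ S : R2, A = lmat S

/-- Strict alternation of the predicates `up`/`lo` along a cascade: no two
consecutive factors are both upper-triangular or both lower-triangular. -/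
def AlternatingP {α : Type*} (up lo : α → Prop) {N : ℕ} (SS : Fin N → α) : Prop :=
  ∀ (i : ℕ) (h : i + 1 < N),
    ¬(up (SS ⟨i, by omega⟩) ∧ up (SS ⟨i + 1, h⟩)) ∧
    ¬(lo (SS ⟨i, by omega⟩) ∧ lo (SS ⟨i + 1, h⟩))

/-- Strict alternation of triangularity along a cascade of matrices. -/
def Alternating {N : ℕ} (SS : Fin N → M2) : Prop := AlternatingP IsUpper IsLower SS

/-- An irreducible cascade of lifting matrices: every factor is a lifting matrix,
no factor is the identity, and triangularity strictly alternates. -/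
def IrrCascade {N : ℕ} (SS : Fin N → M2) : Prop :=
  (∀ i, (IsUpper (SS i) ∨ IsLower (SS i)) ∧ SS i ≠ 1) ∧ Alternating SS

lemma TT1 : T (-1) * T (1 : ℤ) = (1 : R2) := by rw [← T_add]; norm_num
lemma TT2 : T (1 : ℤ) * T (-1) = (1 : R2) := by rw [← T_add]; norm_num

lemma Λm_eq : Λm = !![1, 0; 0, T (-1)] := by
  refine Matrix.ext fun i j => ?_
  fin_cases i <;> fin_cases j <;> simp [Λm, Matrix.diagonal]

lemma Λim_eq : Λim = !![1, 0; 0, T 1] := by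
  refine Matrix.ext fun i j => ?_
  fin_cases i <;> fin_cases j <;> simp [Λim, Matrix.diagonal]

lemma ΛmΛim : Λm * Λim = 1 := by
  rw [Λm_eq, Λim_eq]
  refine Matrix.ext fun i j => ?_
  fin_cases i <;> fin_cases j <;>
    simp [-T_mul, Matrix.mul_apply, Fin.sum_univ_two, Matrix.one_apply, TT1, TT2]

lemma ΛimΛm : Λim * Λm = 1 := by
  rw [Λm_eq, Λim_eq]
  refine Matrix.ext fun i j => ?_
  fin_cases i <;> fin_cases j <;>
    simp [-T_mul, Matrix.mul_apply, Fin.sum_univ_two, Matrix.one_apply, TT1, TT2]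

lemma mσ_mul (A B : M2) : mσ (A * B) = mσ A * mσ B := by
  simpa [mσ] using Matrix.map_mul (L := A) (M := B) (f := (σ : R2 ≃+* R2).toRingHom)

/-- cf. Brislawn–Wohlberg, Lemma 8. (i) `υ(S)` satisfies the WS
condition iff `σS = z·S`; (ii) `λ(S)` satisfies it iff `σS = z⁻¹·S`; (iii) if `H`
is a unimodular WS filter bank and `𝐒` is a lifting matrix, then `𝐒·H` is WS iff
`𝐒` is. -/
theorem stmt2 :
    (∀ S : R2, mσ (umat S) = Λm * umat S * Λim ↔ σ S = T 1 * S) ∧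
    (∀ S : R2, mσ (lmat S) = Λm * lmat S * Λim ↔ σ S = T (-1) * S) ∧
    (∀ H SS : M2, H.det = 1 → mσ H = Λm * H * Λim →
      (IsUpper SS ∨ IsLower SS) →
      (mσ (SS * H) = Λm * (SS * H) * Λim ↔ mσ SS = Λm * SS * Λim)) := by
  refine ⟨?_, ?_, ?_⟩
  · intro S
    constructor
    · intro h
      have := congrFun (congrFun h 0) 1
      simpa [-T_mul, mσ, umat, Λm_eq, Λim_eq, Matrix.mul_apply, Fin.sum_univ_two,
        TT1, TT2, mul_comm] using this
    · intro h
      refine Matrix.ext fun i j => ?_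
      fin_cases i <;> fin_cases j <;>
        simp [-T_mul, mσ, umat, Λm_eq, Λim_eq, Matrix.mul_apply, Fin.sum_univ_two,
          TT1, TT2, h, mul_comm]
  · intro S
    constructor
    · intro h
      have := congrFun (congrFun h 1) 0
      simpa [-T_mul, mσ, lmat, Λm_eq, Λim_eq, Matrix.mul_apply, Fin.sum_univ_two,
        TT1, TT2, mul_comm] using this
    · intro h
      refine Matrix.ext fun i j => ?_
      fin_cases i <;> fin_cases j <;>
        simp [-T_mul, mσ, lmat, Λm_eq, Λim_eq, Matrix.mul_apply, Fin.sum_univ_two,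
          TT1, TT2, h, mul_comm]
  · intro H SS hdet hH _
    have hHu : IsUnit H := by
      rw [Matrix.isUnit_iff_isUnit_det, hdet]; exact isUnit_one
    have hΛu : IsUnit Λm := by
      rw [Matrix.isUnit_iff_isUnit_det, Λm_eq, Matrix.det_fin_two_of]
      simpa using isUnit_T (-1)
    have hΛiu : IsUnit Λim := by
      rw [Matrix.isUnit_iff_isUnit_det, Λim_eq, Matrix.det_fin_two_of]
      simpa using isUnit_T 1
    have hXu : IsUnit (Λm * H * Λim) := (hΛu.mul hHu).mul hΛiu
    have hmid : ∀ X : M2, Λim * (Λm * X) = X := fun X => by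
      rw [← mul_assoc, ΛimΛm, one_mul]
    have hsplit : (Λm * SS * Λim) * (Λm * H * Λim) = Λm * (SS * H) * Λim := by
      simp only [mul_assoc, hmid]
    constructor
    · intro h
      refine hXu.mul_right_cancel ?_
      calc mσ SS * (Λm * H * Λim) = mσ SS * mσ H := by rw [hH]
      _ = mσ (SS * H) := (mσ_mul SS H).symm
      _ = Λm * (SS * H) * Λim := h
      _ = (Λm * SS * Λim) * (Λm * H * Λim) := hsplit.symm
    · intro h
      calc mσ (SS * H) = mσ SS * mσ H := mσ_mul SS H
      _ = (Λm * SS * Λim) * (Λm * H * Λim) := by rw [h, hH]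
      _ = Λm * (SS * H) * Λim := hsplit
end
end

section
/- A matrix H ∈ SL(2,R) satisfies σH = Λ·H·Λ⁻¹ if and only if there exist K ∈ ℝ with K ≠ 0, an integer N ≥ 0, and lifting matrices S₀, …, S_{N−1}, each either of the form υ(S) with σS = z·S or of the form λ(S) with σS = z⁻¹·S, such that H = D_K·S_{N−1}⋯S₁·S₀. -/
open LaurentPolynomial Matrix

noncomputable section

namespace S3

/-! ### Coefficient lemmas for Laurent polynomials -/

def w : R2 := T 1 + T (-1)
def u : R2 := 1 + T (-1)
def v : R2 := 1 + T 1
def φp : Polynomial ℝ →ₐ[ℝ] R2 := Polynomial.aeval w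

lemma T_mul_apply (n m : ℤ) (f : R2) : ((T n : R2) * f).coeff m = f.coeff (m - n) := by
  rw [show (T n : R2) = AddMonoidAlgebra.single n 1 from rfl,
    AddMonoidAlgebra.coeff_single_mul_apply]
  rw [one_mul, neg_add_eq_sub]

lemma C_mul_apply (r : ℝ) (f : R2) (m : ℤ) : ((LaurentPolynomial.C r : R2) * f).coeff m = r * f.coeff m := by
  rw [show (LaurentPolynomial.C r : R2) = AddMonoidAlgebra.single 0 r from rfl,
    AddMonoidAlgebra.coeff_single_mul_apply, neg_zero, zero_add]

lemma one_apply (m : ℤ) : (1 : R2).coeff m = if m = 0 then 1 else 0 := by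
  rw [← T_zero, T_apply]; simp [eq_comm]

lemma w_mul_apply (f : R2) (m : ℤ) : (w * f).coeff m = f.coeff (m - 1) + f.coeff (m + 1) := by
  rw [w, add_mul, AddMonoidAlgebra.coeff_add, Finsupp.add_apply, T_mul_apply, T_mul_apply, sub_neg_eq_add]

lemma wpow_bound : ∀ (k : ℕ) (m : ℤ), ((k : ℤ) < m ∨ m < -(k:ℤ)) → (w ^ k).coeff m = 0 := by
  intro k
  induction k with
  | zero => intro m hm; rw [pow_zero, one_apply]; simp only [ite_eq_right_iff]; omega
  | succ k ih =>
    intro m hm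
    rw [pow_succ, mul_comm, w_mul_apply]
    rw [ih (m-1) (by push_cast at hm ⊢; omega), ih (m+1) (by push_cast at hm ⊢; omega), add_zero]

lemma wpow_top : ∀ (k : ℕ), (w ^ k).coeff (k : ℤ) = 1 := by
  intro k
  induction k with
  | zero => rw [pow_zero, one_apply]; simp
  | succ k ih =>
    rw [pow_succ, mul_comm, w_mul_apply]
    push_cast
    rw [show (k:ℤ) + 1 - 1 = k by ring, ih, wpow_bound k ((k:ℤ)+1+1) (by omega), add_zero]

lemma σ_w : σ w = w := by
  show invert _ = _
  rw [w, _root_.map_add, invert_T, invert_T]; ring_nf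

lemma σ_φp (p : Polynomial ℝ) : σ (φp p) = φp p := by
  have h := Polynomial.aeval_algHom (σ.toAlgHom) w
  calc σ (φp p) = (σ.toAlgHom.comp (Polynomial.aeval w)) p := rfl
    _ = (Polynomial.aeval (σ.toAlgHom w)) p := by rw [← h]
    _ = φp p := by
        show (Polynomial.aeval (σ w)) p = _
        rw [σ_w]; rfl

lemma σ_pow_w (k : ℕ) : σ (w ^ k) = w ^ k := by rw [map_pow, σ_w]

lemma wpow_bot (k : ℕ) : (w ^ k).coeff (-(k : ℤ)) = 1 := by
  have h1 : (w ^ k).coeff (-(k:ℤ)) = (invert (w ^ k)).coeff (k : ℤ) := (invert_apply _ _).symm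
  rw [h1, show (invert (w^k) : R2) = w ^ k from σ_pow_w k, wpow_top]

lemma u_mul_apply (f : R2) (m : ℤ) : (u * f).coeff m = f.coeff m + f.coeff (m + 1) := by
  rw [u, add_mul, one_mul, AddMonoidAlgebra.coeff_add, Finsupp.add_apply, T_mul_apply, sub_neg_eq_add]

lemma σ_u : σ u = (T 1 : R2) * u := by
  show invert _ = _
  rw [u, _root_.map_add, _root_.map_one, invert_T, mul_add, mul_one, ← T_add]
  norm_num
  rw [add_comm]

lemma σ_v : σ v = (T (-1) : R2) * v := by
  show invert _ = _
  rw [v, _root_.map_add, _root_.map_one, invert_T, mul_add, mul_one, ← T_add]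
  norm_num
  rw [add_comm]

lemma T1_mul_u : (T 1 : R2) * u = v := by
  rw [u, v, mul_add, mul_one, ← T_add]
  norm_num
  rw [add_comm]

lemma uv : u * v = w + 2 := by
  have h : (T (-1) : R2) * T 1 = 1 := by rw [← T_add]; norm_num
  calc u * v = 1 + T 1 + T (-1) + T (-1) * T 1 := by rw [u, v]; ring
    _ = w + 2 := by rw [h, w]; ring

lemma algebraMap_eq (r : ℝ) : algebraMap ℝ R2 r = LaurentPolynomial.C r := rfl

lemma φp_C (r : ℝ) : φp (Polynomial.C r) = LaurentPolynomial.C r := by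
  rw [φp, Polynomial.aeval_C, algebraMap_eq]

lemma φp_X : φp Polynomial.X = w := by rw [φp, Polynomial.aeval_X]

lemma φp_X2 : φp (Polynomial.X + Polynomial.C 2) = w + 2 := by
  rw [_root_.map_add, φp_X, φp_C]
  congr 1

lemma symm_coeff {a : R2} (h : σ a = a) (m : ℤ) : a.coeff (-m) = a.coeff m := by
  conv_rhs => rw [← h]
  exact (invert_apply a m).symm

lemma half_coeff {b : R2} (h : σ b = (T 1 : R2) * b) (m : ℤ) : b.coeff (-m) = b.coeff (m - 1) := by
  have : (invert b : R2).coeff m = ((T 1 : R2) * b).coeff m := by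
    rw [show (invert b : R2) = ((T 1 : R2) * b) from h]
  rw [invert_apply] at this
  rw [this, T_mul_apply]

lemma exists_bound (a : R2) : ∃ n : ℕ, ∀ m : ℤ, ((n:ℤ) < m ∨ m < -(n:ℤ)) → a.coeff m = 0 := by
  refine ⟨a.coeff.support.sup fun m => m.natAbs, fun m hm => ?_⟩
  by_contra hne
  have hmem : m ∈ a.coeff.support := Finsupp.mem_support_iff.mpr hne
  have h1 := Finset.le_sup (f := fun m : ℤ => m.natAbs) hmem
  have h2 : (m.natAbs : ℤ) ≤ ((a.coeff.support.sup fun m => m.natAbs : ℕ) : ℤ) := by exact_mod_cast h1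
  rcases Int.natAbs_eq m with h3 | h3 <;> omega

lemma symm_decomp : ∀ (n : ℕ) (a : R2), σ a = a →
    (∀ m : ℤ, ((n:ℤ) < m ∨ m < -(n:ℤ)) → a.coeff m = 0) → ∃ A, a = φp A := by
  intro n
  induction n with
  | zero =>
    intro a hs hb
    refine ⟨Polynomial.C (a.coeff 0), ?_⟩
    rw [φp_C]
    ext m
    rcases eq_or_ne m 0 with rfl | hm0
    · rw [LaurentPolynomial.C_apply, if_pos rfl]
    · rw [hb m (by omega), LaurentPolynomial.C_apply, if_neg hm0]
  | succ n ih =>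
    intro a hs hb
    set α := a.coeff ((n:ℤ)+1) with hα
    set a' := a - LaurentPolynomial.C α * w ^ (n+1) with ha'
    have hs' : σ a' = a' := by
      rw [ha', _root_.map_sub, _root_.map_mul, hs,
        show σ (LaurentPolynomial.C α) = LaurentPolynomial.C α from invert_C α, σ_pow_w]
    have hb' : ∀ m : ℤ, ((n:ℤ) < m ∨ m < -(n:ℤ)) → a'.coeff m = 0 := by
      intro m hm
      rw [ha', AddMonoidAlgebra.coeff_sub, Finsupp.sub_apply, C_mul_apply]
      rcases eq_or_ne m ((n:ℤ)+1) with rfl | h1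
      · have h1 : (w ^ (n+1)).coeff ((n:ℤ)+1) = 1 := by
          have := wpow_top (n+1); push_cast at this; exact this
        rw [h1, ← hα]; ring
      rcases eq_or_ne m (-((n:ℤ)+1)) with rfl | h2
      · have h2 : (w ^ (n+1)).coeff (-((n:ℤ)+1)) = 1 := by
          have := wpow_bot (n+1); push_cast at this; exact this
        rw [h2, symm_coeff hs, ← hα]; ring
      · rw [hb m (by push_cast; omega), wpow_bound (n+1) m (by push_cast; omega)]; ring
    obtain ⟨A', hA'⟩ := ih a' hs' hb'
    refine ⟨A' + Polynomial.C α * Polynomial.X ^ (n+1), ?_⟩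
    rw [_root_.map_add, _root_.map_mul, _root_.map_pow, φp_C, φp_X, ← hA', ha']
    ring

lemma half_decomp : ∀ (n : ℕ) (b : R2), σ b = (T 1 : R2) * b →
    (∀ m : ℤ, ((n:ℤ) ≤ m ∨ m < -(n:ℤ)) → b.coeff m = 0) → ∃ P, b = u * φp P := by
  intro n
  induction n with
  | zero =>
    intro b hs hb
    refine ⟨0, ?_⟩
    rw [_root_.map_zero, mul_zero]
    ext m
    rw [hb m (by omega)]
    rfl
  | succ n ih =>
    intro b hs hb
    set β := b.coeff (n:ℤ) with hβ
    set b' := b - LaurentPolynomial.C β * (u * w ^ n) with hb'def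
    have hs' : σ b' = (T 1 : R2) * b' := by
      rw [hb'def, _root_.map_sub, _root_.map_mul, _root_.map_mul, hs,
        show σ (LaurentPolynomial.C β) = LaurentPolynomial.C β from invert_C β,
        σ_pow_w, σ_u]
      ring
    have hb' : ∀ m : ℤ, ((n:ℤ) ≤ m ∨ m < -(n:ℤ)) → b'.coeff m = 0 := by
      intro m hm
      rw [hb'def, AddMonoidAlgebra.coeff_sub, Finsupp.sub_apply, C_mul_apply, u_mul_apply]
      rcases eq_or_ne m (n:ℤ) with rfl | h1
      · rw [wpow_top, wpow_bound n ((n:ℤ)+1) (by omega), ← hβ]; ring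
      rcases eq_or_ne m (-((n:ℤ)+1)) with rfl | h2
      · rw [wpow_bound n (-((n:ℤ)+1)) (by omega),
          show -((n:ℤ)+1) + 1 = -(n:ℤ) by ring, wpow_bot]
        have : b.coeff (-((n:ℤ)+1)) = b.coeff ((n:ℤ)+1-1) := half_coeff hs ((n:ℤ)+1)
        rw [this, show (n:ℤ)+1-1 = (n:ℤ) by ring, ← hβ]; ring
      · rw [hb m (by push_cast; omega), wpow_bound n m (by omega),
          wpow_bound n (m+1) (by omega)]; ring
    obtain ⟨P', hP'⟩ := ih b' hs' hb'
    refine ⟨P' + Polynomial.C β * Polynomial.X ^ n, ?_⟩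
    rw [_root_.map_add, _root_.map_mul, _root_.map_pow, φp_C, φp_X, mul_add, ← hP', hb'def]
    ring

lemma φp_apply_natDegree (p : Polynomial ℝ) : (φp p).coeff (p.natDegree : ℤ) = p.leadingCoeff := by
  rw [φp, Polynomial.aeval_eq_sum_range]
  rw [AddMonoidAlgebra.coeff_sum, Finsupp.finset_sum_apply]
  rw [Finset.sum_eq_single p.natDegree]
  · rw [AddMonoidAlgebra.coeff_smul, Finsupp.smul_apply, wpow_top, smul_eq_mul, mul_one, Polynomial.leadingCoeff]
  · intro i hi hne
    rw [AddMonoidAlgebra.coeff_smul, Finsupp.smul_apply, wpow_bound i (p.natDegree : ℤ)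
      (by left; exact_mod_cast lt_of_le_of_ne (Finset.mem_range_succ_iff.mp hi) hne), smul_zero]
  · intro h; exact absurd (Finset.self_mem_range_succ _) h

lemma φp_inj : Function.Injective φp := by
  rw [injective_iff_map_eq_zero]
  intro p hp
  by_contra hne
  have h1 : (φp p).coeff (p.natDegree : ℤ) = p.leadingCoeff := φp_apply_natDegree p
  rw [hp] at h1
  exact Polynomial.leadingCoeff_ne_zero.mpr hne (by rw [← h1]; rfl)

/-! ### Symmetry predicate and its closure properties -/

def Sym (H : M2) : Prop := mσ H = Λm * H * Λim

lemma mσ_mul (A B : M2) : mσ (A * B) = mσ A * mσ B :=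
  Matrix.map_mul (f := ((LaurentPolynomial.invert : R2 ≃ₐ[ℝ] R2) : R2 →+* R2))

lemma mσ_fin2 (a b c d : R2) : mσ !![a, b; c, d] = !![σ a, σ b; σ c, σ d] := by
  ext i j
  fin_cases i <;> fin_cases j <;> rfl

lemma Λm_eq : Λm = !![(1 : R2), 0; 0, T (-1)] := by
  ext i j; fin_cases i <;> fin_cases j <;> simp [Λm, Matrix.diagonal]

lemma Λim_eq : Λim = !![(1 : R2), 0; 0, T 1] := by
  ext i j; fin_cases i <;> fin_cases j <;> simp [Λim, Matrix.diagonal]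

lemma Tm1_T1 : (T (-1) : R2) * T 1 = 1 := by rw [← T_add]; norm_num

lemma T1_Tm1 : (T 1 : R2) * T (-1) = 1 := by rw [← T_add]; norm_num

lemma Λim_mul_Λm : Λim * Λm = 1 := by
  rw [Λm_eq, Λim_eq, Matrix.mul_fin_two, Matrix.one_fin_two, T1_Tm1]
  norm_num

lemma Λm_mul_Λim : Λm * Λim = 1 := by
  rw [Λm_eq, Λim_eq, Matrix.mul_fin_two, Matrix.one_fin_two, Tm1_T1]
  norm_num

lemma sym_mul {A B : M2} (hA : Sym A) (hB : Sym B) : Sym (A * B) := by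
  unfold Sym at *
  rw [mσ_mul, hA, hB]
  calc Λm * A * Λim * (Λm * B * Λim) = Λm * (A * ((Λim * Λm) * B)) * Λim := by
        simp only [mul_assoc]
    _ = Λm * (A * B) * Λim := by rw [Λim_mul_Λm, one_mul]

lemma sym_one : Sym 1 := by
  unfold Sym
  have h1 : mσ 1 = 1 := Matrix.map_one _ (map_zero _) (map_one _)
  rw [h1, mul_one, Λm_mul_Λim]

lemma sym_DKm (K : ℝ) : Sym (DKm K) := by
  unfold Sym
  have hD : DKm K = !![LaurentPolynomial.C K⁻¹, 0; 0, LaurentPolynomial.C K] := by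
    ext i j; fin_cases i <;> fin_cases j <;> simp [DKm, Matrix.diagonal]
  rw [hD, mσ_fin2, Λm_eq, Λim_eq, Matrix.mul_fin_two, Matrix.mul_fin_two]
  rw [show σ (LaurentPolynomial.C K⁻¹) = LaurentPolynomial.C K⁻¹ from invert_C _,
    show σ (LaurentPolynomial.C K) = LaurentPolynomial.C K from invert_C _,
    show σ (0 : R2) = 0 from map_zero _]
  simp only [one_mul, mul_one, zero_mul, mul_zero, add_zero, zero_add]
  rw [show (T (-1) : R2) * LaurentPolynomial.C K * T 1
      = LaurentPolynomial.C K * (T (-1) * T 1) by ring, Tm1_T1, mul_one]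

lemma sym_umat {S : R2} (hS : σ S = T 1 * S) : Sym (umat S) := by
  unfold Sym
  rw [umat, mσ_fin2, Λm_eq, Λim_eq, Matrix.mul_fin_two, Matrix.mul_fin_two]
  rw [hS, show σ (1 : R2) = 1 from map_one _, show σ (0 : R2) = 0 from map_zero _]
  simp only [one_mul, mul_one, zero_mul, mul_zero, add_zero, zero_add]
  rw [Tm1_T1, mul_comm S (T 1)]

lemma sym_lmat {S : R2} (hS : σ S = T (-1) * S) : Sym (lmat S) := by
  unfold Sym
  rw [lmat, mσ_fin2, Λm_eq, Λim_eq, Matrix.mul_fin_two, Matrix.mul_fin_two]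
  rw [hS, show σ (1 : R2) = 1 from map_one _, show σ (0 : R2) = 0 from map_zero _]
  simp only [one_mul, mul_one, zero_mul, mul_zero, add_zero, zero_add]
  rw [Tm1_T1]

lemma sym_list_prod : ∀ l : List M2, (∀ A ∈ l, Sym A) → Sym l.prod := by
  intro l
  induction l with
  | nil => intro _; simpa using sym_one
  | cons A l ih =>
    intro h
    rw [List.prod_cons]
    exact sym_mul (h A List.mem_cons_self) (ih fun B hB => h B (List.mem_cons_of_mem A hB))

/-! ### The factorization predicate `Good` -/

def Good (H : M2) : Prop :=
  ∃ K : ℝ, K ≠ 0 ∧ ∃ (N : ℕ) (SS : Fin N → M2),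
    (∀ i, (∃ S : R2, SS i = umat S ∧ σ S = T 1 * S) ∨
          (∃ S : R2, SS i = lmat S ∧ σ S = T (-1) * S)) ∧
    H = DKm K * prodRev SS

lemma prodRev_snoc {N : ℕ} (SS : Fin N → M2) (A : M2) :
    prodRev (Fin.snoc SS A) = A * prodRev SS := by
  rw [prodRev, prodRev, show List.ofFn (Fin.snoc SS A) = (List.ofFn SS).concat A by
    rw [List.ofFn_succ']; simp]
  rw [List.concat_eq_append, List.reverse_append]
  simp

lemma prodRev_single (SS : Fin 1 → M2) : prodRev SS = SS 0 := by
  simp [prodRev, List.ofFn_succ]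

lemma C_mul_C (x y : ℝ) : (LaurentPolynomial.C x : R2) * LaurentPolynomial.C y
    = LaurentPolynomial.C (x * y) := (map_mul _ _ _).symm

lemma DKm_eq (K : ℝ) : DKm K = !![LaurentPolynomial.C K⁻¹, 0; 0, LaurentPolynomial.C K] := by
  ext i j; fin_cases i <;> fin_cases j <;> simp [DKm, Matrix.diagonal]

lemma good_lift (A H : M2)
    (hA : (∃ S : R2, A = umat S ∧ σ S = T 1 * S) ∨ (∃ S : R2, A = lmat S ∧ σ S = T (-1) * S))
    (h : Good H) : Good (A * H) := by
  obtain ⟨K, hK, N, SS, hSS, rfl⟩ := h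
  rcases hA with ⟨S, rfl, hS⟩ | ⟨S, rfl, hS⟩
  · refine ⟨K, hK, N+1, Fin.snoc SS (umat (LaurentPolynomial.C (K^2) * S)), ?_, ?_⟩
    · intro i
      refine Fin.lastCases ?_ ?_ i
      · rw [Fin.snoc_last]
        left
        refine ⟨_, rfl, ?_⟩
        rw [_root_.map_mul, show σ (LaurentPolynomial.C (K^2)) = LaurentPolynomial.C (K^2)
          from invert_C _, hS]
        ring
      · intro j; rw [Fin.snoc_castSucc]; exact hSS j
    · rw [prodRev_snoc, ← mul_assoc, ← mul_assoc]
      congr 1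
      have hsc : LaurentPolynomial.C K⁻¹ * (LaurentPolynomial.C (K^2) * S)
          = S * LaurentPolynomial.C K := by
        rw [← mul_assoc, C_mul_C, show K⁻¹ * K^2 = K by field_simp]
        ring
      rw [DKm_eq]
      simp only [umat, Matrix.mul_fin_two]
      simp only [one_mul, mul_one, zero_mul, mul_zero, add_zero, zero_add]
      rw [hsc]
  · refine ⟨K, hK, N+1, Fin.snoc SS (lmat (LaurentPolynomial.C (K⁻¹ * K⁻¹) * S)), ?_, ?_⟩
    · intro i
      refine Fin.lastCases ?_ ?_ i
      · rw [Fin.snoc_last]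
        right
        refine ⟨_, rfl, ?_⟩
        rw [_root_.map_mul, show σ (LaurentPolynomial.C (K⁻¹ * K⁻¹)) = LaurentPolynomial.C (K⁻¹ * K⁻¹)
          from invert_C _, hS]
        ring
      · intro j; rw [Fin.snoc_castSucc]; exact hSS j
    · rw [prodRev_snoc, ← mul_assoc, ← mul_assoc]
      congr 1
      have hsc : LaurentPolynomial.C K * (LaurentPolynomial.C (K⁻¹ * K⁻¹) * S)
          = S * LaurentPolynomial.C K⁻¹ := by
        rw [← mul_assoc, C_mul_C, show K * (K⁻¹ * K⁻¹) = K⁻¹ by field_simp]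
        ring
      rw [DKm_eq]
      simp only [lmat, Matrix.mul_fin_two]
      simp only [one_mul, mul_one, zero_mul, mul_zero, add_zero, zero_add]
      rw [hsc]

lemma good_base (α : ℝ) (hα : α ≠ 0) (b : R2) (hb : σ b = T 1 * b) :
    Good !![LaurentPolynomial.C α, b; 0, LaurentPolynomial.C α⁻¹] := by
  refine ⟨α⁻¹, inv_ne_zero hα, 1, fun _ => umat (LaurentPolynomial.C α⁻¹ * b), ?_, ?_⟩
  · intro i
    left
    refine ⟨_, rfl, ?_⟩
    rw [_root_.map_mul, show σ (LaurentPolynomial.C α⁻¹) = LaurentPolynomial.C α⁻¹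
      from invert_C _, hb]
    ring
  · rw [prodRev_single, DKm_eq, inv_inv, umat, Matrix.mul_fin_two]
    simp only [one_mul, mul_one, zero_mul, mul_zero, add_zero, zero_add]
    rw [← mul_assoc, C_mul_C, mul_inv_cancel₀ hα]
    simp

/-! ### The Euclidean factorization -/

def mk (A P Q D : Polynomial ℝ) : M2 := !![φp A, u * φp P; v * φp Q, φp D]

lemma euclid_base (A P D : Polynomial ℝ) (h : A * D = 1) : Good (mk A P 0 D) := by
  obtain ⟨α, hαu, hA⟩ := Polynomial.isUnit_iff.mp (IsUnit.of_mul_eq_one D h)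
  have hα0 : α ≠ 0 := hαu.ne_zero
  have hD : D = Polynomial.C α⁻¹ := by
    have h2 : Polynomial.C α⁻¹ * (A * D) = Polynomial.C α⁻¹ * 1 := by rw [h]
    rw [← hA, ← mul_assoc, ← Polynomial.C_mul, inv_mul_cancel₀ hα0] at h2
    simpa using h2
  have hmk : mk A P 0 D = !![LaurentPolynomial.C α, u * φp P; 0, LaurentPolynomial.C α⁻¹] := by
    rw [mk, ← hA, hD, φp_C, φp_C, _root_.map_zero, mul_zero]
  rw [hmk]
  refine good_base α hα0 (u * φp P) ?_
  rw [_root_.map_mul, σ_u, σ_φp]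
  ring

lemma euclid : ∀ (μ : ℕ) (A P Q D : Polynomial ℝ),
    A * D - (Polynomial.X + Polynomial.C 2) * P * Q = 1 →
    A.natDegree + Q.natDegree + (if Q = 0 then 0 else 1) ≤ μ →
    Good (mk A P Q D) := by
  intro μ
  induction μ using Nat.strong_induction_on with
  | _ μ ih =>
  intro A P Q D hdet hμ
  by_cases hQ : Q = 0
  · subst hQ
    exact euclid_base A P D (by linear_combination hdet)
  · rw [if_neg hQ] at hμ
    have hX2 : (Polynomial.X + Polynomial.C (2:ℝ)) ≠ 0 := Polynomial.X_add_C_ne_zero 2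
    have hA0 : A ≠ 0 := by
      rintro rfl
      have h := congrArg (Polynomial.eval (-2 : ℝ)) hdet
      simp at h
    by_cases hdeg : Q.natDegree < A.natDegree
    · -- upper reduction
      set q := (Polynomial.X + Polynomial.C (2:ℝ)) * Q with hq
      have hq0 : q ≠ 0 := mul_ne_zero hX2 hQ
      set s := A / q with hs
      set A' := A % q with hA'
      have hrec : q * s + A' = A := EuclideanDomain.div_add_mod A q
      have hA'deg : A'.natDegree ≤ Q.natDegree := by
        by_cases h0 : A' = 0
        · simp [h0]
        · have h1 : A'.natDegree < q.natDegree :=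
            Polynomial.natDegree_lt_natDegree h0 (EuclideanDomain.mod_lt A hq0)
          have h2 : q.natDegree = 1 + Q.natDegree := by
            rw [hq, Polynomial.natDegree_mul hX2 hQ, Polynomial.natDegree_X_add_C]
          omega
      set P' := P - s * D with hP'def
      have hA'eq : A' = A - (Polynomial.X + Polynomial.C 2) * Q * s := by
        rw [← hrec]; ring
      have hdet' : A' * D - (Polynomial.X + Polynomial.C 2) * P' * Q = 1 := by
        rw [hA'eq, hP'def]; linear_combination hdet
      have hGood : Good (mk A' P' Q D) :=
        ih (A'.natDegree + Q.natDegree + 1) (by omega) A' P' Q D hdet' (by rw [if_neg hQ])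
      have e00 : φp A' + u * φp s * (v * φp Q) = φp A := by
        have h3 : u * φp s * (v * φp Q) = φp (q * s) := by
          rw [hq, _root_.map_mul, _root_.map_mul, φp_X2, ← uv]; ring
        rw [h3, ← _root_.map_add, show A' + q * s = A by rw [← hrec]; ring]
      have e01 : u * φp P' + u * φp s * φp D = u * φp P := by
        rw [hP'def, _root_.map_sub, _root_.map_mul]; ring
      have hmk : mk A P Q D = umat (u * φp s) * mk A' P' Q D := by
        rw [mk, mk, umat, Matrix.mul_fin_two]
        simp only [one_mul, zero_mul, zero_add, add_zero]
        rw [e00, e01]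
      rw [hmk]
      refine good_lift _ _ (Or.inl ⟨u * φp s, rfl, ?_⟩) hGood
      rw [_root_.map_mul, σ_u, σ_φp]; ring
    · -- lower reduction
      set t := Q / A with ht
      set Q' := Q % A with hQ'
      have hrec : A * t + Q' = Q := EuclideanDomain.div_add_mod Q A
      set D' := D - (Polynomial.X + Polynomial.C 2) * t * P with hD'def
      have hQ'eq : Q' = Q - A * t := by rw [← hrec]; ring
      have hdet' : A * D' - (Polynomial.X + Polynomial.C 2) * P * Q' = 1 := by
        rw [hQ'eq, hD'def]; linear_combination hdet
      have hmeas : A.natDegree + Q'.natDegree + (if Q' = 0 then 0 else 1)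
          < A.natDegree + Q.natDegree + 1 := by
        by_cases h0 : Q' = 0
        · rw [if_pos h0, h0]
          simp
        · rw [if_neg h0]
          have h1 : Q'.natDegree < A.natDegree :=
            Polynomial.natDegree_lt_natDegree h0 (EuclideanDomain.mod_lt Q hA0)
          omega
      have hGood : Good (mk A P Q' D') :=
        ih (A.natDegree + Q'.natDegree + (if Q' = 0 then 0 else 1)) (by omega) A P Q' D'
          hdet' le_rfl
      have e10 : v * φp t * φp A + v * φp Q' = v * φp Q := by
        rw [← hrec, _root_.map_add, _root_.map_mul]; ring
      have e11 : v * φp t * (u * φp P) + φp D' = φp D := by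
        have h3 : v * φp t * (u * φp P) = φp ((Polynomial.X + Polynomial.C 2) * t * P) := by
          rw [_root_.map_mul, _root_.map_mul, φp_X2, ← uv]; ring
        rw [h3, hD'def, _root_.map_sub, _root_.map_mul, _root_.map_mul]
        ring
      have hmk : mk A P Q D = lmat (v * φp t) * mk A P Q' D' := by
        rw [mk, mk, lmat, Matrix.mul_fin_two]
        simp only [one_mul, zero_mul, zero_add, add_zero]
        rw [e10, e11]
      rw [hmk]
      refine good_lift _ _ (Or.inr ⟨v * φp t, rfl, ?_⟩) hGood
      rw [_root_.map_mul, σ_v, σ_φp]; ring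

end S3

/-- cf. Brislawn–Wohlberg, Theorem 9.  A unimodular filter bank
is delay-minimized WS iff it factors as `D_K · S_{N-1} ⋯ S₀` into lifting matrices
with half-sample symmetric lifting filters. -/
theorem stmt3 (H : M2) (hdet : H.det = 1) :
    mσ H = Λm * H * Λim ↔
      ∃ K : ℝ, K ≠ 0 ∧ ∃ (N : ℕ) (SS : Fin N → M2),
        (∀ i, (∃ S : R2, SS i = umat S ∧ σ S = T 1 * S) ∨
              (∃ S : R2, SS i = lmat S ∧ σ S = T (-1) * S)) ∧
        H = DKm K * prodRev SS := by
  constructor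
  · intro hsym
    -- extract the entrywise symmetry conditions
    have key : ∀ i j, σ (H i j) = ![(1:R2), T (-1)] i * H i j * ![(1:R2), T 1] j := by
      intro i j
      have h := congrArg (fun M : M2 => M i j) hsym
      simpa [mσ, Matrix.map_apply, Λm, Λim, Matrix.diagonal_mul, Matrix.mul_diagonal] using h
    have h00 : σ (H 0 0) = H 0 0 := by simpa using key 0 0
    have h11 : σ (H 1 1) = H 1 1 := by simpa using key 1 1
    have h01 : σ (H 0 1) = T 1 * H 0 1 := by
      have h := key 0 1
      simp at h
      rw [h, mul_comm]
    have h10 : σ (H 1 0) = T (-1) * H 1 0 := by simpa using key 1 0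
    -- decompose the entries
    obtain ⟨n0, hb0⟩ := S3.exists_bound (H 0 0)
    obtain ⟨A, hA⟩ := S3.symm_decomp n0 _ h00 hb0
    obtain ⟨n3, hb3⟩ := S3.exists_bound (H 1 1)
    obtain ⟨D, hD⟩ := S3.symm_decomp n3 _ h11 hb3
    obtain ⟨n1, hb1⟩ := S3.exists_bound (H 0 1)
    obtain ⟨P, hP⟩ := S3.half_decomp (n1+1) _ h01
      (fun m hm => hb1 m (by push_cast at hm ⊢; omega))
    -- the lower-left entry
    have h10' : σ (σ (H 1 0)) = T 1 * σ (H 1 0) := by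
      conv_lhs => rw [h10]
      rw [_root_.map_mul, show σ (T (-1) : R2) = T 1 from invert_T (-1)]
    obtain ⟨n2, hb2⟩ := S3.exists_bound (σ (H 1 0))
    obtain ⟨Q, hQ⟩ := S3.half_decomp (n2+1) _ h10'
      (fun m hm => hb2 m (by push_cast at hm ⊢; omega))
    have hQ' : H 1 0 = S3.v * S3.φp Q := by
      have h1 : σ (σ (H 1 0)) = H 1 0 := involutive_invert (H 1 0)
      rw [← h1]
      conv_lhs => rw [hQ]
      rw [_root_.map_mul, S3.σ_u, S3.σ_φp, S3.T1_mul_u]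
    -- identify H with mk A P Q D
    have hH : H = S3.mk A P Q D := by
      rw [S3.mk, ← hA, ← hD, ← hP, ← hQ']
      ext i j
      fin_cases i <;> fin_cases j <;> simp
    -- transfer the determinant condition
    have hdet2 : H 0 0 * H 1 1 - H 0 1 * H 1 0 = 1 := by
      rw [← Matrix.det_fin_two, hdet]
    have hdetP : A * D - (Polynomial.X + Polynomial.C 2) * P * Q = 1 := by
      apply S3.φp_inj
      rw [_root_.map_one, _root_.map_sub, _root_.map_mul, _root_.map_mul, _root_.map_mul,
        S3.φp_X2, ← S3.uv]
      rw [hA, hD, hP, hQ'] at hdet2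
      linear_combination hdet2
    have := S3.euclid (A.natDegree + Q.natDegree + (if Q = 0 then 0 else 1)) A P Q D hdetP le_rfl
    rw [← hH] at this
    exact this
  · rintro ⟨K, hK, N, SS, hSS, rfl⟩
    have h1 : S3.Sym (prodRev SS) := by
      apply S3.sym_list_prod
      intro A hA
      rw [List.mem_reverse, List.mem_ofFn] at hA
      obtain ⟨i, rfl⟩ := hA
      rcases hSS i with ⟨S, hSi, hS⟩ | ⟨S, hSi, hS⟩
      · rw [hSi]; exact S3.sym_umat hS
      · rw [hSi]; exact S3.sym_lmat hS
    exact S3.sym_mul (S3.sym_DKm K) h1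
end
end

section
/- Let H ∈ 𝔥 (so σH = L·H·J and det H = 1), and let 𝐒 be a lifting matrix, 𝐒 = υ(S) or 𝐒 = λ(S) for some S ∈ R. If the right-lifted matrix F := H·𝐒 also satisfies σF = L·F·J, then S = 0, i.e., 𝐒 = I and F = H. -/
open LaurentPolynomial Matrix

noncomputable section

/-- cf. Brislawn–Wohlberg, Theorem 12; no nontrivial right lifts
of HS filter banks.  If `H ∈ 𝔥` and `F = H·𝐒` also satisfies the HS condition
for a lifting matrix `𝐒`, then `S = 0`, `𝐒 = I` and `F = H`. -/
theorem stmt4 (H : M2) (S : R2) (SS : M2)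
    (hdet : H.det = 1) (hH : mσ H = Lm * H * Jm)
    (hS : SS = umat S ∨ SS = lmat S)
    (hF : mσ (H * SS) = Lm * (H * SS) * Jm) :
    S = 0 ∧ SS = 1 ∧ H * SS = H := by
  have hmul : mσ (H * SS) = mσ H * mσ SS := by
    simpa [mσ] using
      Matrix.map_mul (L := H) (M := SS) (f := (σ : R2 ≃ₐ[ℝ] R2).toAlgHom.toRingHom)
  have hu : IsUnit (Lm * H) := by
    rw [Matrix.isUnit_iff_isUnit_det, Matrix.det_mul, hdet, mul_one]
    have hL : Lm.det = -1 := by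
      simp [Lm, Matrix.det_diagonal, Fin.prod_univ_two]
    rw [hL]
    exact isUnit_one.neg
  have key : Jm * mσ SS = SS * Jm := by
    apply hu.mul_left_cancel
    calc Lm * H * (Jm * mσ SS) = (Lm * H * Jm) * mσ SS := by
          rw [mul_assoc, mul_assoc, mul_assoc]
      _ = mσ H * mσ SS := by rw [← hH]
      _ = Lm * (H * SS) * Jm := by rw [← hmul, hF]
      _ = Lm * H * (SS * Jm) := by
          rw [mul_assoc, mul_assoc, mul_assoc]
  have hS0 : S = 0 := by
    rcases hS with h | h
    · have e := congrFun (congrFun (h ▸ key) 0) 0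
      simpa [Jm, umat, mσ, Matrix.mul_apply, Fin.sum_univ_two, Matrix.map_apply,
        eq_comm] using e
    · have e := congrFun (congrFun (h ▸ key) 0) 0
      have hσ : σ S = 0 := by
        simpa [Jm, lmat, mσ, Matrix.mul_apply, Fin.sum_univ_two,
          Matrix.map_apply] using e
      have := congrArg σ.symm hσ
      simpa using this
  subst hS0
  have hSS1 : SS = 1 := by
    rcases hS with h | h <;> subst h <;>
      · ext i j
        fin_cases i <;> fin_cases j <;> simp [umat, lmat, Matrix.one_apply]
  exact ⟨rfl, hSS1, by rw [hSS1, mul_one]⟩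
end
end

section
/- Let 𝐒 be a lifting matrix, 𝐒 = υ(S) or 𝐒 = λ(S) for some S ∈ R, let H ∈ SL(2,R), and set F := 𝐒·H. If H ∈ 𝔥, then F ∈ 𝔥 if and only if σ𝐒 = L·𝐒·L, which holds if and only if the lifting filter is whole-sample antisymmetric about 0, i.e., σS = −S; and in that case L·𝐒·L = 𝐒⁻¹. Symmetrically, if F ∈ 𝔥, then H ∈ 𝔥 if and only if σS = −S. -/
open LaurentPolynomial Matrix

noncomputable section

/-- Membership in the unimodular HS class `𝔥`. -/
def memH (H : M2) : Prop := H.det = 1 ∧ mσ H = Lm * H * Jm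


lemma Lm_eq : Lm = !![1,0;0,-1] := by
  ext i j; fin_cases i <;> fin_cases j <;> simp [Lm]

lemma LL : Lm * Lm = 1 := by
  rw [Lm_eq]; simp [← Matrix.one_fin_two]

lemma det_Lm : Lm.det = -1 := by simp [Lm, Fin.prod_univ_two]
lemma det_Jm : Jm.det = -1 := by simp [Jm, Matrix.det_fin_two_of]
lemma det_umat (S : R2) : (umat S).det = 1 := by simp [umat, Matrix.det_fin_two_of]
lemma det_lmat (S : R2) : (lmat S).det = 1 := by simp [lmat, Matrix.det_fin_two_of]

lemma mσ_umat (S : R2) : mσ (umat S) = umat (σ S) := by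
  ext i j; fin_cases i <;> fin_cases j <;> simp [mσ, umat]

lemma mσ_lmat (S : R2) : mσ (lmat S) = lmat (σ S) := by
  ext i j; fin_cases i <;> fin_cases j <;> simp [mσ, lmat]

lemma LuL (S : R2) : Lm * umat S * Lm = umat (-S) := by
  rw [Lm_eq]; simp [umat, Matrix.mul_fin_two]

lemma LlL (S : R2) : Lm * lmat S * Lm = lmat (-S) := by
  rw [Lm_eq]; simp [lmat, Matrix.mul_fin_two]

lemma umat_inj {a b : R2} (h : umat a = umat b) : a = b := by
  have := congrFun (congrFun h 0) 1; simpa [umat] using this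

lemma lmat_inj {a b : R2} (h : lmat a = lmat b) : a = b := by
  have := congrFun (congrFun h 1) 0; simpa [lmat] using this

lemma umat_mul (a b : R2) : umat a * umat b = umat (a + b) := by
  simp [umat, Matrix.mul_fin_two]; ring

lemma lmat_mul (a b : R2) : lmat a * lmat b = lmat (a + b) := by
  simp [lmat, Matrix.mul_fin_two]

lemma umat_zero : umat 0 = 1 := by simp [umat, ← Matrix.one_fin_two]
lemma lmat_zero : lmat 0 = 1 := by simp [lmat, ← Matrix.one_fin_two]

lemma mul_right_cancel' {A B X : M2} (hX : IsUnit X.det) (h : A * X = B * X) : A = B := by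
  have := congrArg (fun Y => Y * X⁻¹) h
  simpa [Matrix.mul_nonsing_inv_cancel_right _ _ hX] using this

lemma LkeyAB (A B : M2) : (Lm * A * Lm) * (Lm * B * Jm) = Lm * (A * B) * Jm := by
  simp only [Matrix.mul_assoc]
  rw [← Matrix.mul_assoc Lm Lm (B * Jm), LL, Matrix.one_mul]

lemma stmt5_aux (H : M2) (S : R2) (m : R2 → M2)
    (hdet : H.det = 1)
    (hm : ∀ a, mσ (m a) = m (σ a))
    (hL : ∀ a, Lm * m a * Lm = m (-a))
    (hinj : ∀ a b : R2, m a = m b → a = b)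
    (hdetm : ∀ a, (m a).det = 1)
    (hmul : ∀ a b, m a * m b = m (a + b))
    (hzero : m 0 = 1) :
    (memH H →
      ((memH (m S * H) ↔ mσ (m S) = Lm * m S * Lm) ∧
       (memH (m S * H) ↔ σ S = -S) ∧
       (σ S = -S → Lm * m S * Lm = (m S)⁻¹))) ∧
    (memH (m S * H) → (memH H ↔ σ S = -S)) := by
  have hinvr : m S * m (-S) = 1 := by rw [hmul]; simp [hzero]
  have hinvl : m (-S) * m S = 1 := by rw [hmul]; simp [hzero]
  have hinv : (m S)⁻¹ = m (-S) := Matrix.inv_eq_right_inv hinvr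
  have hXdet : IsUnit (Lm * H * Jm).det := by
    rw [Matrix.det_mul, Matrix.det_mul, det_Lm, hdet, det_Jm]; norm_num
  have iff2 : mσ (m S) = Lm * m S * Lm ↔ σ S = -S := by
    rw [hm, hL]
    exact ⟨fun h => hinj _ _ h, fun h => by rw [h]⟩
  have iff1 : mσ H = Lm * H * Jm → (memH (m S * H) ↔ mσ (m S) = Lm * m S * Lm) := by
    intro hHσ
    constructor
    · rintro ⟨-, hF⟩
      rw [mσ_mul, hHσ] at hF
      exact mul_right_cancel' hXdet (by rw [hF, LkeyAB])
    · intro h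
      exact ⟨by rw [Matrix.det_mul, hdetm, hdet, one_mul],
             by rw [mσ_mul, hHσ, h, LkeyAB]⟩
  constructor
  · intro hH
    exact ⟨iff1 hH.2, (iff1 hH.2).trans iff2, fun _ => by rw [hL, hinv]⟩
  · rintro ⟨hFd, hFσ⟩
    constructor
    · intro hH
      exact iff2.mp ((iff1 hH.2).mp ⟨hFd, hFσ⟩)
    · intro hSA
      refine ⟨hdet, ?_⟩
      have hmσS : mσ (m S) = m (-S) := by rw [hm, hSA]
      rw [mσ_mul, hmσS] at hFσ
      have h1 : mσ H = m S * (Lm * (m S * H) * Jm) := by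
        rw [← hFσ, ← Matrix.mul_assoc, hinvr, Matrix.one_mul]
      have h2 : m S = Lm * m (-S) * Lm := by rw [hL, neg_neg]
      calc mσ H = m S * (Lm * (m S * H) * Jm) := h1
        _ = (Lm * m (-S) * Lm) * (Lm * (m S * H) * Jm) := by rw [← h2]
        _ = Lm * (m (-S) * (m S * H)) * Jm := LkeyAB _ _
        _ = Lm * H * Jm := by rw [← Matrix.mul_assoc (m (-S)) (m S) H, hinvl, Matrix.one_mul]

/-- cf. Brislawn–Wohlberg, Lemma 10.  For a lifting matrix `𝐒`
and `H ∈ SL(2,R)`, set `F = 𝐒·H`.  If `H ∈ 𝔥` then `F ∈ 𝔥` iff `σ𝐒 = L·𝐒·L`,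
iff the lifting filter is whole-sample antisymmetric (`σS = -S`); in that case
`L·𝐒·L = 𝐒⁻¹`.  Symmetrically, if `F ∈ 𝔥` then `H ∈ 𝔥` iff `σS = -S`. -/
theorem stmt5 (H : M2) (S : R2) (SS : M2) (hdet : H.det = 1)
    (hS : SS = umat S ∨ SS = lmat S) :
    (memH H →
      ((memH (SS * H) ↔ mσ SS = Lm * SS * Lm) ∧
       (memH (SS * H) ↔ σ S = -S) ∧
       (σ S = -S → Lm * SS * Lm = SS⁻¹))) ∧
    (memH (SS * H) → (memH H ↔ σ S = -S)) := by
  rcases hS with rfl | rfl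
  · exact stmt5_aux H S umat hdet mσ_umat LuL (fun a b h => umat_inj h) det_umat umat_mul umat_zero
  · exact stmt5_aux H S lmat hdet mσ_lmat LlL (fun a b h => lmat_inj h) det_lmat lmat_mul lmat_zero
end
end

section
/- Let 𝔖 = (𝒟, 𝒰, ℒ, 𝔅) be a group lifting structure satisfying: (1) for every B ∈ 𝔅, the polyphase support intervals of its two rows coincide, suppint(b₀) = suppint(b₁); and (2) for every B ∈ 𝔅 and every irreducible cascade S_{N−1}⋯S₀ over 𝒰 ∪ ℒ, the partial products E⁽ⁿ⁾ := S_n⋯S₀·B satisfy the proper inclusion suppint(e⁽ⁿ⁾_{1−m_n}) ⊊ suppint(e⁽ⁿ⁾_{m_n}) for all 0 ≤ n < N, where e⁽ⁿ⁾_i denotes row i of E⁽ⁿ⁾ and m_n is the update characteristic of S_n (m_n = 0 if S_n is upper-triangular, m_n = 1 if lower-triangular). Then 𝔖 is strictly polyphase order-increasing. -/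
open LaurentPolynomial Matrix

noncomputable section

/-- Combined support (in the exponent variable) of a row vector over `R`. -/
def rsupp (e : Fin 2 → R2) : Finset ℤ := (e 0).coeff.support ∪ (e 1).coeff.support

/-- Polyphase support interval of a (nonzero) row vector `𝒆 = Σ 𝒆(n) z⁻ⁿ`:
the smallest interval of integers `n` containing all `n` with `𝒆(n) ≠ 0`. -/
def rsuppint (e : Fin 2 → R2) : Set ℤ :=
  Set.Icc (-((rsupp e).max.unbotD 0)) (-((rsupp e).min.untopD 0))

/-- Row `i` of a matrix. -/
def mrow (H : M2) (i : Fin 2) : Fin 2 → R2 := fun j => H i j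

/-- A group lifting structure: additive groups `P₀`, `P₁` of lifting filters
(giving the lifting matrix groups `𝒰 = υ(P₀)` and `ℒ = λ(P₁)`), the full
gain-scaling group `𝒟`, and a set `𝔅 ⊆ SL(2,R)` of base filter banks. -/
structure GLS where
  P0 : AddSubgroup R2
  P1 : AddSubgroup R2
  Bset : Set M2
  hB : ∀ B ∈ Bset, Matrix.det B = 1

/-- The upper-triangular lifting matrix group `𝒰 = υ(P₀)`. -/
def GLS.Uset (G : GLS) : Set M2 := umat '' (G.P0 : Set R2)

/-- The lower-triangular lifting matrix group `ℒ = λ(P₁)`. -/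
def GLS.Lset (G : GLS) : Set M2 := lmat '' (G.P1 : Set R2)

/-- `𝒟`-invariance: every `γ_K` (`K ≠ 0`) fixes `𝒰` and `ℒ`. -/
def GLS.DInv (G : GLS) : Prop :=
  ∀ K : ℝ, K ≠ 0 → γm K '' G.Uset = G.Uset ∧ γm K '' G.Lset = G.Lset

/-- An irreducible cascade over `𝒰 ∪ ℒ`. -/
def GLS.IrrCas (G : GLS) {N : ℕ} (SS : Fin N → M2) : Prop :=
  (∀ i, SS i ∈ G.Uset ∪ G.Lset ∧ SS i ≠ 1) ∧ Alternating SS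

/-- The strictly polyphase order-increasing property: along every irreducible
cascade applied to every base filter bank, the polyphase order of the partial
products strictly increases. -/
def GLS.OrderInc (G : GLS) : Prop :=
  ∀ B ∈ G.Bset, ∀ (N : ℕ) (SS : Fin N → M2), G.IrrCas SS →
    ∀ n < N, morder (partialE SS B (n + 1)) > morder (partialE SS B n)


/-! ### Auxiliary lemmas for `stmt10` -/

def rhi (e : Fin 2 → R2) : ℤ := (rsupp e).max.unbotD 0
def rlo (e : Fin 2 → R2) : ℤ := (rsupp e).min.untopD 0

lemma rsuppint_eq (e : Fin 2 → R2) : rsuppint e = Set.Icc (-(rhi e)) (-(rlo e)) := rfl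

lemma rhi_eq (e : Fin 2 → R2) (h : (rsupp e).Nonempty) : rhi e = (rsupp e).max' h := by
  rw [rhi, ← Finset.coe_max' h]; rfl

lemma rlo_eq (e : Fin 2 → R2) (h : (rsupp e).Nonempty) : rlo e = (rsupp e).min' h := by
  rw [rlo, ← Finset.coe_min' h]; rfl

lemma rlo_le_rhi {e : Fin 2 → R2} (h : (rsupp e).Nonempty) : rlo e ≤ rhi e := by
  rw [rhi_eq e h, rlo_eq e h]
  exact Finset.min'_le _ _ (Finset.max'_mem _ h)

lemma neg_rhi_le_neg_rlo {e : Fin 2 → R2} (h : (rsupp e).Nonempty) :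
    -(rhi e) ≤ -(rlo e) := neg_le_neg (rlo_le_rhi h)

lemma subset_bounds {e f : Fin 2 → R2} (he : (rsupp e).Nonempty)
    (hsub : rsuppint e ⊆ rsuppint f) : rhi e ≤ rhi f ∧ rlo f ≤ rlo e := by
  rw [rsuppint_eq, rsuppint_eq, Set.Icc_subset_Icc_iff (neg_rhi_le_neg_rlo he)] at hsub
  omega

lemma ssub_len {e f : Fin 2 → R2} (he : (rsupp e).Nonempty)
    (hsub : rsuppint e ⊂ rsuppint f) : rhi e - rlo e < rhi f - rlo f := by
  obtain ⟨h1, h2⟩ := subset_bounds he hsub.subset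
  by_contra hcon
  push_neg at hcon
  have he1 : rhi e = rhi f := by omega
  have he2 : rlo e = rlo f := by omega
  exact hsub.ne (by rw [rsuppint_eq, rsuppint_eq, he1, he2])

lemma eq_bounds {e f : Fin 2 → R2} (he : (rsupp e).Nonempty) (hf : (rsupp f).Nonempty)
    (h : rsuppint e = rsuppint f) : rhi e = rhi f ∧ rlo e = rlo f := by
  obtain ⟨a1, a2⟩ := subset_bounds he h.subset
  obtain ⟨b1, b2⟩ := subset_bounds hf h.symm.subset
  omega

lemma msupp_eq (H : M2) : msupp H = rsupp (mrow H 0) ∪ rsupp (mrow H 1) := by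
  ext n
  simp only [msupp, rsupp, mrow, Finset.mem_biUnion, Finset.mem_univ, true_and,
    Finset.mem_union, Prod.exists]
  constructor
  · rintro ⟨i, j, h⟩
    fin_cases i <;> fin_cases j <;> simp_all
  · rintro ((h | h) | (h | h))
    exacts [⟨0, 0, h⟩, ⟨0, 1, h⟩, ⟨1, 0, h⟩, ⟨1, 1, h⟩]

lemma morder_formula {H : M2} (h0 : (rsupp (mrow H 0)).Nonempty)
    (h1 : (rsupp (mrow H 1)).Nonempty) :
    morder H = max (rhi (mrow H 0)) (rhi (mrow H 1)) - min (rlo (mrow H 0)) (rlo (mrow H 1)) := by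
  have hmax : (msupp H).max = ((max (rhi (mrow H 0)) (rhi (mrow H 1)) : ℤ) : WithBot ℤ) := by
    rw [msupp_eq, Finset.max_union, rhi_eq _ h0, rhi_eq _ h1, ← Finset.coe_max' h0,
      ← Finset.coe_max' h1]
    exact_mod_cast rfl
  have hmin : (msupp H).min = ((min (rlo (mrow H 0)) (rlo (mrow H 1)) : ℤ) : WithTop ℤ) := by
    rw [msupp_eq, Finset.min_union, rlo_eq _ h0, rlo_eq _ h1, ← Finset.coe_min' h0,
      ← Finset.coe_min' h1]
    exact_mod_cast rfl
  rw [morder, hmax, hmin]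
  rfl

lemma row_umat (S : R2) (E : M2) : mrow (umat S * E) 1 = mrow E 1 := by
  funext j
  simp [mrow, umat, Matrix.mul_apply, Fin.sum_univ_two]

lemma row_lmat (S : R2) (E : M2) : mrow (lmat S * E) 0 = mrow E 0 := by
  funext j
  simp [mrow, lmat, Matrix.mul_apply, Fin.sum_univ_two]

lemma row_nonzero {H : M2} (h : H.det = 1) (i : Fin 2) : (rsupp (mrow H i)).Nonempty := by
  have hd := Matrix.det_fin_two H
  have : H i 0 ≠ 0 ∨ H i 1 ≠ 0 := by
    by_contra hc
    push_neg at hc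
    fin_cases i <;> simp_all
  rcases this with h' | h'
  · exact (Finsupp.support_nonempty_iff.mpr (mt AddMonoidAlgebra.coeff_eq_zero.mp h')).mono Finset.subset_union_left
  · exact (Finsupp.support_nonempty_iff.mpr (mt AddMonoidAlgebra.coeff_eq_zero.mp h')).mono Finset.subset_union_right

lemma not_upper_and_lower {A : M2} (h : A ≠ 1) : ¬(IsUpper A ∧ IsLower A) := by
  rintro ⟨⟨S, rfl⟩, ⟨S', hS'⟩⟩
  have h01 : S = 0 := by
    have := congrFun (congrFun hS' 0) 1
    simpa [umat, lmat] using this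
  apply h
  rw [h01, umat, ← Matrix.one_fin_two]
/-- cf. Brislawn, GLS-II, Lemma 2.  If in a group lifting
structure (1) every base filter bank has equal polyphase support intervals in its
two rows, and (2) along every irreducible cascade the support interval of the
unmodified row of each partial product is properly contained in that of the
updated row, then the structure is strictly polyphase order-increasing. -/

theorem stmt10 (G : GLS)
    (h1 : ∀ B ∈ G.Bset, rsuppint (mrow B 0) = rsuppint (mrow B 1))
    (h2 : ∀ B ∈ G.Bset, ∀ (N : ℕ) (SS : Fin N → M2), G.IrrCas SS →
      ∀ (n : ℕ) (hn : n < N),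
        (IsUpper (SS ⟨n, hn⟩) →
          rsuppint (mrow (partialE SS B (n + 1)) 1) ⊂
            rsuppint (mrow (partialE SS B (n + 1)) 0)) ∧
        (IsLower (SS ⟨n, hn⟩) →
          rsuppint (mrow (partialE SS B (n + 1)) 0) ⊂
            rsuppint (mrow (partialE SS B (n + 1)) 1))) :
    G.OrderInc := by
  intro B hBmem N SS hIrr n hn
  obtain ⟨hmem, halt⟩ := id hIrr
  -- determinants of all factors and partial products are 1
  have hdetS : ∀ i : Fin N, (SS i).det = 1 := by
    intro i
    rcases (hmem i).1 with h | h
    · obtain ⟨S, _, h⟩ := h; rw [← h]; exact det_umat S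
    · obtain ⟨S, _, h⟩ := h; rw [← h]; exact det_lmat S
  have hdet : ∀ k, (partialE SS B k).det = 1 := by
    intro k
    induction k with
    | zero => exact G.hB B hBmem
    | succ k ih =>
      rw [partialE, Matrix.det_mul, ih, mul_one]
      split
      · exact hdetS _
      · simp
  -- each factor is upper xor lower triangular
  have htri : ∀ i : Fin N, (IsUpper (SS i) ∧ ¬ IsLower (SS i)) ∨
      (IsLower (SS i) ∧ ¬ IsUpper (SS i)) := by
    intro i
    have hnb := not_upper_and_lower (hmem i).2
    rcases (hmem i).1 with h | h
    · obtain ⟨S, _, h⟩ := h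
      exact Or.inl ⟨⟨S, h.symm⟩, fun hl => hnb ⟨⟨S, h.symm⟩, hl⟩⟩
    · obtain ⟨S, _, h⟩ := h
      exact Or.inr ⟨⟨S, h.symm⟩, fun hu => hnb ⟨hu, ⟨S, h.symm⟩⟩⟩
  -- the polyphase order of a partial product is the length of the updated row's interval
  have hstep : ∀ k (hk : k < N),
      (IsUpper (SS ⟨k, hk⟩) → morder (partialE SS B (k+1)) =
          rhi (mrow (partialE SS B (k+1)) 0) - rlo (mrow (partialE SS B (k+1)) 0)) ∧
      (IsLower (SS ⟨k, hk⟩) → morder (partialE SS B (k+1)) =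
          rhi (mrow (partialE SS B (k+1)) 1) - rlo (mrow (partialE SS B (k+1)) 1)) := by
    intro k hk
    have h0 := row_nonzero (hdet (k+1)) 0
    have h1' := row_nonzero (hdet (k+1)) 1
    constructor
    · intro hup
      obtain ⟨hs1, hs2⟩ := subset_bounds h1' ((h2 B hBmem N SS hIrr k hk).1 hup).subset
      rw [morder_formula h0 h1']
      omega
    · intro hlo
      obtain ⟨hs1, hs2⟩ := subset_bounds h0 ((h2 B hBmem N SS hIrr k hk).2 hlo).subset
      rw [morder_formula h0 h1']
      omega
  rcases htri ⟨n, hn⟩ with ⟨⟨S, hS⟩, _⟩ | ⟨⟨S, hS⟩, _⟩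
  · -- upper-triangular step: row 1 is unmodified
    have hEn1 : partialE SS B (n+1) = umat S * partialE SS B n := by
      rw [partialE, dif_pos hn, hS]
    have hrow : mrow (partialE SS B (n+1)) 1 = mrow (partialE SS B n) 1 := by
      rw [hEn1]; exact row_umat S _
    have hlen := ssub_len (row_nonzero (hdet (n+1)) 1)
      ((h2 B hBmem N SS hIrr n hn).1 ⟨S, hS⟩)
    have hord1 := (hstep n hn).1 ⟨S, hS⟩
    have hordn : morder (partialE SS B n) =
        rhi (mrow (partialE SS B n) 1) - rlo (mrow (partialE SS B n) 1) := by
      cases n with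
      | zero =>
        show morder B = rhi (mrow B 1) - rlo (mrow B 1)
        have hb0 := row_nonzero (G.hB B hBmem) 0
        have hb1 := row_nonzero (G.hB B hBmem) 1
        obtain ⟨e1, e2⟩ := eq_bounds hb0 hb1 (h1 B hBmem)
        rw [morder_formula hb0 hb1]
        omega
      | succ k =>
        have hk : k < N := by omega
        have hklow : IsLower (SS ⟨k, hk⟩) := by
          rcases htri ⟨k, hk⟩ with ⟨hu', _⟩ | ⟨hl', _⟩
          · exact absurd ⟨hu', ⟨S, hS⟩⟩ ((halt k hn).1)
          · exact hl'
        exact (hstep k hk).2 hklow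
    rw [hordn, ← hrow]
    omega
  · -- lower-triangular step: row 0 is unmodified
    have hEn1 : partialE SS B (n+1) = lmat S * partialE SS B n := by
      rw [partialE, dif_pos hn, hS]
    have hrow : mrow (partialE SS B (n+1)) 0 = mrow (partialE SS B n) 0 := by
      rw [hEn1]; exact row_lmat S _
    have hlen := ssub_len (row_nonzero (hdet (n+1)) 0)
      ((h2 B hBmem N SS hIrr n hn).2 ⟨S, hS⟩)
    have hord1 := (hstep n hn).2 ⟨S, hS⟩
    have hordn : morder (partialE SS B n) =
        rhi (mrow (partialE SS B n) 0) - rlo (mrow (partialE SS B n) 0) := by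
      cases n with
      | zero =>
        show morder B = rhi (mrow B 0) - rlo (mrow B 0)
        have hb0 := row_nonzero (G.hB B hBmem) 0
        have hb1 := row_nonzero (G.hB B hBmem) 1
        obtain ⟨e1, e2⟩ := eq_bounds hb0 hb1 (h1 B hBmem)
        rw [morder_formula hb0 hb1]
        omega
      | succ k =>
        have hk : k < N := by omega
        have hkup : IsUpper (SS ⟨k, hk⟩) := by
          rcases htri ⟨k, hk⟩ with ⟨hu', _⟩ | ⟨hl', _⟩
          · exact hu'
          · exact absurd ⟨hl', ⟨S, hS⟩⟩ ((halt k hn).2)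
        exact (hstep k hk).1 hkup
    rw [hordn, ← hrow]
    omega
end
end

section
/- Let S_{N−1}⋯S₀ be an irreducible cascade of WS lifting matrices (each S_n is either υ(s_n) with σs_n = z·s_n or λ(s_n) with σs_n = z⁻¹·s_n, s_n ≠ 0, with triangularity strictly alternating), set E⁽ⁿ⁾ := S_n⋯S₀, and let E⁽ⁿ⁾_i(z) := E⁽ⁿ⁾_{i0}(z²) + z·E⁽ⁿ⁾_{i1}(z²) (i = 0, 1) be the intermediate scalar filters. Let m_n be the update characteristic of S_n (0 if upper-triangular, 1 if lower-triangular), let t⁽ⁿ⁾ be the support radius of s_n (so t⁽ⁿ⁾ ≥ 1), and let r⁽ⁿ⁾_i be the support radius of E⁽ⁿ⁾_i. Then suppint(E⁽ⁿ⁾_i) = [−r⁽ⁿ⁾_i − i, r⁽ⁿ⁾_i − i] for i = 0, 1 (so E⁽ⁿ⁾_i has support interval centered at −i), and the radii satisfy r⁽ⁿ⁾_{m_n} = r⁽ⁿ⁾_{1−m_n} + 2t⁽ⁿ⁾ − 1 for n ≥ 0, r⁽ⁿ⁾_{1−m_n} = r⁽ⁿ⁻¹⁾_{m_n} + 2t⁽ⁿ⁻¹⁾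 − 1 for n ≥ 1, and r⁽⁰⁾_{1−m₀} = 0. -/
open LaurentPolynomial Matrix

noncomputable section

/-- Support interval `[a,b]` of a (nonzero) scalar filter `F = Σ f(n) z⁻ⁿ`,
as a set of the indices `n`. -/
def sint (f : R2) : Set ℤ :=
  Set.Icc (-(f.coeff.support.max.unbotD 0)) (-(f.coeff.support.min.untopD 0))

/-- Support radius `⌊(b - a + 1)/2⌋` of a (nonzero) scalar filter with
support interval `[a,b]`. -/
def srad (f : R2) : ℤ :=
  ((-(f.coeff.support.min.untopD 0)) - (-(f.coeff.support.max.unbotD 0)) + 1) / 2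

section Aux

namespace Stmt11Aux

/-- Largest exponent with nonzero coefficient (0 for the zero polynomial). -/
def dM (f : R2) : ℤ := f.coeff.support.max.unbotD 0

/-- Smallest exponent with nonzero coefficient (0 for the zero polynomial). -/
def dm (f : R2) : ℤ := f.coeff.support.min.untopD 0

lemma srad_def (f : R2) : srad f = ((-(dm f)) - (-(dM f)) + 1) / 2 := rfl

lemma sint_def (f : R2) : sint f = Set.Icc (-(dM f)) (-(dm f)) := rfl

lemma support_nonempty {f : R2} (hf : f ≠ 0) : f.coeff.support.Nonempty :=
  Finsupp.support_nonempty_iff.mpr (mt AddMonoidAlgebra.coeff_eq_zero.mp hf)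

lemma dM_eq_max' {f : R2} (hf : f ≠ 0) : dM f = f.coeff.support.max' (support_nonempty hf) := by
  rw [dM, ← Finset.coe_max' (support_nonempty hf)]
  rfl

lemma dm_eq_min' {f : R2} (hf : f ≠ 0) : dm f = f.coeff.support.min' (support_nonempty hf) := by
  rw [dm, ← Finset.coe_min' (support_nonempty hf)]
  rfl

lemma dM_mem {f : R2} (hf : f ≠ 0) : dM f ∈ f.coeff.support := by
  rw [dM_eq_max' hf]; exact Finset.max'_mem _ _

lemma dm_mem {f : R2} (hf : f ≠ 0) : dm f ∈ f.coeff.support := by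
  rw [dm_eq_min' hf]; exact Finset.min'_mem _ _

lemma coeff_dM_ne {f : R2} (hf : f ≠ 0) : f.coeff (dM f) ≠ 0 :=
  Finsupp.mem_support_iff.mp (dM_mem hf)

lemma coeff_dm_ne {f : R2} (hf : f ≠ 0) : f.coeff (dm f) ≠ 0 :=
  Finsupp.mem_support_iff.mp (dm_mem hf)

lemma le_dM {f : R2} {n : ℤ} (hn : f.coeff n ≠ 0) : n ≤ dM f := by
  have hf : f ≠ 0 := by rintro rfl; simp at hn
  rw [dM_eq_max' hf]
  exact Finset.le_max' _ _ (Finsupp.mem_support_iff.mpr hn)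

lemma dm_le {f : R2} {n : ℤ} (hn : f.coeff n ≠ 0) : dm f ≤ n := by
  have hf : f ≠ 0 := by rintro rfl; simp at hn
  rw [dm_eq_min' hf]
  exact Finset.min'_le _ _ (Finsupp.mem_support_iff.mpr hn)

lemma dm_le_dM {f : R2} (hf : f ≠ 0) : dm f ≤ dM f := dm_le (coeff_dM_ne hf)

lemma dM_eq {f : R2} {a : ℤ} (h1 : f.coeff a ≠ 0) (h2 : ∀ n, f.coeff n ≠ 0 → n ≤ a) : dM f = a := by
  have hf : f ≠ 0 := by rintro rfl; simp at h1
  exact le_antisymm (h2 _ (coeff_dM_ne hf)) (le_dM h1)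

lemma dm_eq {f : R2} {a : ℤ} (h1 : f.coeff a ≠ 0) (h2 : ∀ n, f.coeff n ≠ 0 → a ≤ n) : dm f = a := by
  have hf : f ≠ 0 := by rintro rfl; simp at h1
  exact le_antisymm (dm_le h1) (h2 _ (coeff_dm_ne hf))

lemma T_apply (n k : ℤ) : (T n : R2).coeff k = if n = k then 1 else 0 :=
  LaurentPolynomial.T_apply k n

lemma T_ne_zero (n : ℤ) : (T n : R2) ≠ 0 := by
  intro h
  have : (T n : R2).coeff n = 0 := by rw [h]; rfl
  rw [T_apply] at this
  simp at this

lemma dM_T (n : ℤ) : dM (T n : R2) = n := by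
  apply dM_eq
  · rw [T_apply]; simp
  · intro k hk
    rw [T_apply] at hk
    by_contra h
    exact hk (if_neg (by omega))

lemma dm_T (n : ℤ) : dm (T n : R2) = n := by
  apply dm_eq
  · rw [T_apply]; simp
  · intro k hk
    rw [T_apply] at hk
    by_contra h
    exact hk (if_neg (by omega))

lemma dM_one : dM (1 : R2) = 0 := by rw [← LaurentPolynomial.T_zero, dM_T]

lemma dm_one : dm (1 : R2) = 0 := by rw [← LaurentPolynomial.T_zero, dm_T]

lemma dM_mul {f g : R2} (hf : f ≠ 0) (hg : g ≠ 0) : dM (f * g) = dM f + dM g := by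
  apply dM_eq
  · have hu : UniqueAdd f.coeff.support g.coeff.support (dM f) (dM g) := by
      intro a b ha hb hab
      have h1 := le_dM (Finsupp.mem_support_iff.mp ha)
      have h2 := le_dM (Finsupp.mem_support_iff.mp hb)
      omega
    rw [AddMonoidAlgebra.coeff_mul_add_of_uniqueAdd hu]
    exact mul_ne_zero (coeff_dM_ne hf) (coeff_dM_ne hg)
  · intro n hn
    classical
    have hmem := AddMonoidAlgebra.support_coeff_mul_subset f g (Finsupp.mem_support_iff.mpr hn)
    obtain ⟨a, ha, b, hb, rfl⟩ := Finset.mem_add.mp hmem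
    have h1 := le_dM (Finsupp.mem_support_iff.mp ha)
    have h2 := le_dM (Finsupp.mem_support_iff.mp hb)
    omega

lemma σ_apply (f : R2) (n : ℤ) : (σ f).coeff n = f.coeff (-n) := LaurentPolynomial.invert_apply f n

lemma σ_ne {f : R2} (hf : f ≠ 0) : σ f ≠ 0 := by
  intro h
  exact hf (by simpa using σ.injective (h.trans (map_zero σ).symm))

lemma dM_σ {f : R2} (hf : f ≠ 0) : dM (σ f) = -(dm f) := by
  apply dM_eq
  · rw [σ_apply, neg_neg]; exact coeff_dm_ne hf
  · intro n hn
    rw [σ_apply] at hn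
    have := dm_le hn
    omega

lemma dm_σ {f : R2} (hf : f ≠ 0) : dm (σ f) = -(dM f) := by
  apply dm_eq
  · rw [σ_apply, neg_neg]; exact coeff_dM_ne hf
  · intro n hn
    rw [σ_apply] at hn
    have := le_dM hn
    omega

lemma dm_mul {f g : R2} (hf : f ≠ 0) (hg : g ≠ 0) : dm (f * g) = dm f + dm g := by
  have h : dM (σ (f * g)) = -(dm (f * g)) := dM_σ (mul_ne_zero hf hg)
  rw [_root_.map_mul, dM_mul (σ_ne hf) (σ_ne hg), dM_σ hf, dM_σ hg] at h
  omega

lemma sub2_eq (f : R2) : sub2 f = AddMonoidAlgebra.mapDomain (fun n : ℤ => 2 * n) f := rfl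

lemma sub2_apply (f : R2) (k : ℤ) : (sub2 f).coeff (2 * k) = f.coeff k := by
  rw [sub2_eq, AddMonoidAlgebra.coeff_mapDomain]
  exact Finsupp.mapDomain_apply (fun a b h => by omega) f.coeff k

lemma sub2_ne {f : R2} (hf : f ≠ 0) : sub2 f ≠ 0 := by
  intro h
  apply hf
  ext k
  have : (sub2 f).coeff (2 * k) = 0 := by rw [h]; rfl
  rwa [sub2_apply] at this

lemma sub2_support (f : R2) : (sub2 f).coeff.support = f.coeff.support.image (fun n => 2 * n) := by
  classical
  rw [sub2_eq, AddMonoidAlgebra.coeff_mapDomain]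
  exact Finsupp.mapDomain_support_of_injective (fun a b h => by omega) f.coeff

lemma dM_sub2 {f : R2} (hf : f ≠ 0) : dM (sub2 f) = 2 * dM f := by
  apply dM_eq
  · rw [sub2_apply]; exact coeff_dM_ne hf
  · intro n hn
    have : n ∈ (sub2 f).coeff.support := Finsupp.mem_support_iff.mpr hn
    rw [sub2_support] at this
    obtain ⟨a, ha, rfl⟩ := Finset.mem_image.mp this
    have := le_dM (Finsupp.mem_support_iff.mp ha)
    omega

lemma sub2_T (n : ℤ) : sub2 (T n) = (T (2 * n) : R2) := by
  rw [sub2_eq, LaurentPolynomial.T, AddMonoidAlgebra.mapDomain_single]; rfl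

lemma σ_eq_mapDomain (f : R2) : σ f = AddMonoidAlgebra.mapDomain (fun n : ℤ => -n) f := by
  ext n
  rw [σ_apply, show n = -(-n) by ring, AddMonoidAlgebra.coeff_mapDomain]
  rw [Finsupp.mapDomain_apply (fun a b h => by omega) f.coeff (-n)]
  simp

lemma σ_sub2 (f : R2) : σ (sub2 f) = sub2 (σ f) := by
  rw [σ_eq_mapDomain, sub2_eq, sub2_eq, σ_eq_mapDomain]
  apply AddMonoidAlgebra.coeff_injective
  simp only [AddMonoidAlgebra.coeff_mapDomain]
  rw [← Finsupp.mapDomain_comp, ← Finsupp.mapDomain_comp]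
  congr 1
  funext n
  simp only [Function.comp_apply]
  ring

lemma dM_add_right {f g : R2} (hg : g ≠ 0) (h : dM f < dM g) :
    f + g ≠ 0 ∧ dM (f + g) = dM g := by
  have hf0 : f.coeff (dM g) = 0 := by
    by_contra hc
    have := le_dM hc
    omega
  have hco : (f + g).coeff (dM g) ≠ 0 := by
    rw [AddMonoidAlgebra.coeff_add, Finsupp.add_apply, hf0, zero_add]
    exact coeff_dM_ne hg
  refine ⟨fun h0 => hco (by rw [h0]; rfl), dM_eq hco ?_⟩
  intro n hn
  have hn' : f.coeff n ≠ 0 ∨ g.coeff n ≠ 0 := by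
    by_contra hc
    push_neg at hc
    rw [AddMonoidAlgebra.coeff_add, Finsupp.add_apply, hc.1, hc.2] at hn
    simp at hn
  rcases hn' with hc | hc
  · have := le_dM hc; omega
  · exact le_dM hc

lemma dm_of_symm {f : R2} (hf : f ≠ 0) {c : ℤ} (h : σ f = T c * f) : dm f = -c - dM f := by
  have h1 : dm (σ f) = -(dM f) := dm_σ hf
  rw [h, dm_mul (T_ne_zero c) hf, dm_T] at h1
  omega

/-- Key step lemma: updating a symmetric filter by `sub2 S * B`. -/
lemma step {A B S : R2} {u v w : ℤ} (hB : B ≠ 0) (hS : S ≠ 0)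
    (hAs : σ A = T u * A) (hBs : σ B = T v * B) (hSs : σ S = T w * S)
    (hw : 2 * w + v = u)
    (hlt : dM A < 2 * dM S + dM B) :
    (A + sub2 S * B ≠ 0) ∧ (σ (A + sub2 S * B) = T u * (A + sub2 S * B)) ∧
      dM (A + sub2 S * B) = 2 * dM S + dM B := by
  have hSB : sub2 S * B ≠ 0 := mul_ne_zero (sub2_ne hS) hB
  have hdm : dM (sub2 S * B) = 2 * dM S + dM B := by
    rw [dM_mul (sub2_ne hS) hB, dM_sub2 hS]
  have h1 := dM_add_right hSB (show dM A < dM (sub2 S * B) by omega)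
  refine ⟨h1.1, ?_, by rw [h1.2, hdm]⟩
  rw [_root_.map_add, _root_.map_mul, hAs, hBs, σ_sub2, hSs, _root_.map_mul, sub2_T]
  rw [mul_add]
  congr 1
  calc (T (2 * w) * sub2 S) * (T v * B)
      = (T (2 * w) * T v) * (sub2 S * B) := by ring
    _ = T u * (sub2 S * B) := by rw [← LaurentPolynomial.T_add, show 2 * w + v = u from hw]

lemma fin2_cases (j : Fin 2) : j = 0 ∨ j = 1 := by omega

lemma fin2_one_sub_coe (j : Fin 2) : (((1 - j : Fin 2) : ℕ) : ℤ) = 1 - ((j : ℕ) : ℤ) := by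
  rcases fin2_cases j with rfl | rfl <;> rfl

lemma fin2_one_sub_one_sub (j : Fin 2) : 1 - (1 - j) = j := by
  rcases fin2_cases j with rfl | rfl <;> rfl

lemma fin2_ne_iff {a b : Fin 2} (h : a ≠ b) : a = 1 - b := by
  rcases fin2_cases a with rfl | rfl <;> rcases fin2_cases b with rfl | rfl <;>
    first | rfl | exact absurd rfl h

lemma scal_one_zero : scal 1 0 = 1 := by
  have h0 : (1 : M2) 0 0 = 1 := Matrix.one_apply_eq 0
  have h1 : (1 : M2) 0 1 = 0 := Matrix.one_apply_ne (by decide)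
  rw [scal, h0, h1, _root_.map_one, _root_.map_zero, mul_zero, add_zero]

lemma scal_one_one : scal 1 1 = T 1 := by
  have h0 : (1 : M2) 1 0 = 0 := Matrix.one_apply_ne (by decide)
  have h1 : (1 : M2) 1 1 = 1 := Matrix.one_apply_eq 1
  rw [scal, h0, h1, _root_.map_one, _root_.map_zero, mul_one, zero_add]

lemma scal_umat_mul (S : R2) (H : M2) :
    scal (umat S * H) 0 = scal H 0 + sub2 S * scal H 1 ∧
      scal (umat S * H) 1 = scal H 1 := by
  constructor <;>
  · simp only [scal, umat, Matrix.mul_apply, Fin.sum_univ_two, Matrix.of_apply, Matrix.cons_val', Matrix.cons_val_zero,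
      Matrix.cons_val_one, Matrix.head_cons, Matrix.empty_val', Matrix.cons_val_fin_one,
      Matrix.head_fin_const, _root_.map_add, _root_.map_mul, _root_.map_one, _root_.map_zero,
      one_mul, zero_mul]
    ring

lemma scal_lmat_mul (S : R2) (H : M2) :
    scal (lmat S * H) 1 = scal H 1 + sub2 S * scal H 0 ∧
      scal (lmat S * H) 0 = scal H 0 := by
  constructor <;>
  · simp only [scal, lmat, Matrix.mul_apply, Fin.sum_univ_two, Matrix.of_apply, Matrix.cons_val', Matrix.cons_val_zero,
      Matrix.cons_val_one, Matrix.head_cons, Matrix.empty_val', Matrix.cons_val_fin_one,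
      Matrix.head_fin_const, _root_.map_add, _root_.map_mul, _root_.map_one, _root_.map_zero,
      one_mul, zero_mul]
    ring

end Stmt11Aux

end Aux
section Key

namespace Stmt11Aux

lemma coe01 : ((0 : Fin 2) : ℤ) = 0 ∧ ((1 : Fin 2) : ℤ) = 1 := by constructor <;> rfl

lemma fin2_bounds (j : Fin 2) : 0 ≤ (j : ℤ) ∧ (j : ℤ) ≤ 1 := by
  rcases fin2_cases j with rfl | rfl <;> simp

/-- Symmetry facts about the lifting filters. -/
lemma t_bound {N : ℕ} (s : Fin N → R2) (m : Fin N → Fin 2)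
    (hs0 : ∀ n, s n ≠ 0)
    (hsym : ∀ n, (m n = 0 → σ (s n) = T 1 * s n) ∧ (m n = 1 → σ (s n) = T (-1) * s n))
    (j : Fin N) :
    ((m j : ℤ)) ≤ dM (s j) ∧ dm (s j) = 2 * ((m j : ℤ)) - 1 - dM (s j) := by
  have hle := dm_le_dM (hs0 j)
  rcases fin2_cases (m j) with hj | hj
  · have h := dm_of_symm (hs0 j) ((hsym j).1 hj)
    rw [hj]
    have c := coe01.1
    constructor <;> omega
  · have h := dm_of_symm (hs0 j) ((hsym j).2 hj)
    rw [hj]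
    have c := coe01.2
    constructor <;> omega

lemma srad_s {N : ℕ} (s : Fin N → R2) (m : Fin N → Fin 2)
    (hs0 : ∀ n, s n ≠ 0)
    (hsym : ∀ n, (m n = 0 → σ (s n) = T 1 * s n) ∧ (m n = 1 → σ (s n) = T (-1) * s n))
    (j : Fin N) :
    srad (s j) = dM (s j) + 1 - ((m j : ℤ)) := by
  have h := (t_bound s m hs0 hsym j).2
  have h2 := (t_bound s m hs0 hsym j).1
  rw [srad_def]
  omega

lemma srad_sint {f : R2} (hf : f ≠ 0) {i : ℤ} (hs : σ f = T (-(2 * i)) * f)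
    (hgei : i ≤ dM f) :
    srad f = dM f - i ∧ sint f = Set.Icc (-(dM f - i) - i) ((dM f - i) - i) := by
  have hdm := dm_of_symm hf hs
  have e1 : -(dM f) = -(dM f - i) - i := by omega
  have e2 : -(dm f) = dM f - i - i := by omega
  exact ⟨by rw [srad_def]; omega, by rw [sint_def, e1, e2]⟩

lemma key (N : ℕ) (s : Fin N → R2) (m : Fin N → Fin 2) (SS : Fin N → M2)
    (hs0 : ∀ n, s n ≠ 0)
    (hSS : ∀ n, (m n = 0 → SS n = umat (s n)) ∧ (m n = 1 → SS n = lmat (s n)))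
    (hsym : ∀ n, (m n = 0 → σ (s n) = T 1 * s n) ∧ (m n = 1 → σ (s n) = T (-1) * s n))
    (halt : ∀ (i : ℕ) (h : i + 1 < N), m ⟨i + 1, h⟩ ≠ m ⟨i, by omega⟩) :
    ∀ n, n ≤ N →
      (∀ i : Fin 2, scal (partialE SS 1 n) i ≠ 0) ∧
      (∀ i : Fin 2, σ (scal (partialE SS 1 n) i) =
        T (-(2 * (i : ℤ))) * scal (partialE SS 1 n) i) ∧
      (∀ i : Fin 2, (i : ℤ) ≤ dM (scal (partialE SS 1 n) i)) ∧
      (n = 0 → ∀ i : Fin 2, dM (scal (partialE SS 1 n) i) = (i : ℤ)) ∧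
      (∀ (k : ℕ) (hk : k < N), k + 1 = n →
        dM (scal (partialE SS 1 n) (m ⟨k, hk⟩)) - ((m ⟨k, hk⟩ : Fin 2) : ℤ) =
          (dM (scal (partialE SS 1 n) (1 - m ⟨k, hk⟩)) - ((1 - m ⟨k, hk⟩ : Fin 2) : ℤ))
            + 2 * (dM (s ⟨k, hk⟩) + 1 - ((m ⟨k, hk⟩ : Fin 2) : ℤ)) - 1) ∧
      (∀ (k : ℕ) (hk : k < N), k + 1 = n →
        scal (partialE SS 1 n) (1 - m ⟨k, hk⟩) = scal (partialE SS 1 k) (1 - m ⟨k, hk⟩)) := by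
  intro n
  induction n with
  | zero =>
    intro _
    have e0 : partialE SS (1 : M2) 0 = 1 := rfl
    have hT0 : (T (-(2 * ((0 : Fin 2) : ℤ))) : R2) = 1 := by
      rw [show (-(2 * ((0 : Fin 2) : ℤ))) = 0 by rw [coe01.1]; ring, LaurentPolynomial.T_zero]
    refine ⟨?_, ?_, ?_, ?_, ?_, ?_⟩
    · intro i
      rcases fin2_cases i with rfl | rfl
      · rw [e0, scal_one_zero]; exact one_ne_zero
      · rw [e0, scal_one_one]; exact T_ne_zero 1
    · intro i
      rcases fin2_cases i with rfl | rfl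
      · rw [e0, scal_one_zero, _root_.map_one, hT0, one_mul]
      · rw [e0, scal_one_one]
        show LaurentPolynomial.invert (T 1) = _
        rw [LaurentPolynomial.invert_T, ← LaurentPolynomial.T_add]
        congr 1
    · intro i
      rcases fin2_cases i with rfl | rfl
      · rw [e0, scal_one_zero, dM_one, coe01.1]
      · rw [e0, scal_one_one, dM_T, coe01.2]
    · intro _ i
      rcases fin2_cases i with rfl | rfl
      · rw [e0, scal_one_zero, dM_one, coe01.1]
      · rw [e0, scal_one_one, dM_T, coe01.2]
    · intro k hk habs; omega
    · intro k hk habs; omega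
  | succ n ih =>
    intro hn1
    have hn : n < N := hn1
    obtain ⟨hne, hsy, hge, h0, hrec, -⟩ := ih (Nat.le_of_succ_le hn1)
    have hE : partialE SS (1 : M2) (n + 1) = SS ⟨n, hn⟩ * partialE SS 1 n := by
      show (if h : n < N then SS ⟨n, h⟩ else 1) * partialE SS 1 n = _
      rw [dif_pos hn]
    have c0 := coe01.1
    have c1 := coe01.2
    have hμb := fin2_bounds (m ⟨n, hn⟩)
    have hνμ : ((1 - m ⟨n, hn⟩ : Fin 2) : ℤ) = 1 - ((m ⟨n, hn⟩ : Fin 2) : ℤ) :=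
      fin2_one_sub_coe _
    have htsn := t_bound s m hs0 hsym ⟨n, hn⟩
    -- dominance of the non-updated row
    have hkey : dM (scal (partialE SS 1 n) (m ⟨n, hn⟩)) - ((m ⟨n, hn⟩ : Fin 2) : ℤ) ≤
        dM (scal (partialE SS 1 n) (1 - m ⟨n, hn⟩)) - ((1 - m ⟨n, hn⟩ : Fin 2) : ℤ) := by
      rcases Nat.eq_zero_or_pos n with rfl | hpos
      · rw [h0 rfl (m ⟨0, hn⟩), h0 rfl (1 - m ⟨0, hn⟩)]
        omega
      · obtain ⟨k, rfl⟩ : ∃ k, n = k + 1 := ⟨n - 1, by omega⟩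
        have hk : k < N := by omega
        have hmk : m ⟨k, hk⟩ = 1 - m ⟨k + 1, hn⟩ := fin2_ne_iff (Ne.symm (halt k hn))
        have hr := hrec k hk rfl
        have htsk := (t_bound s m hs0 hsym ⟨k, hk⟩).1
        rw [hmk, fin2_one_sub_one_sub] at hr
        rw [hmk] at htsk
        omega
    have hdom : dM (scal (partialE SS 1 n) (m ⟨n, hn⟩)) <
        2 * dM (s ⟨n, hn⟩) + dM (scal (partialE SS 1 n) (1 - m ⟨n, hn⟩)) := by
      have h1 := hge (m ⟨n, hn⟩)
      have h2 := hge (1 - m ⟨n, hn⟩)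
      omega
    rcases fin2_cases (m ⟨n, hn⟩) with hμ0 | hμ1
    · -- upper-triangular step, row 0 updated
      have hSSn : SS ⟨n, hn⟩ = umat (s ⟨n, hn⟩) := (hSS _).1 hμ0
      have hA : scal (partialE SS 1 (n + 1)) 0 =
          scal (partialE SS 1 n) 0 + sub2 (s ⟨n, hn⟩) * scal (partialE SS 1 n) 1 := by
        rw [hE, hSSn]; exact (scal_umat_mul _ _).1
      have hB : scal (partialE SS 1 (n + 1)) 1 = scal (partialE SS 1 n) 1 := by
        rw [hE, hSSn]; exact (scal_umat_mul _ _).2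
      have hσs : σ (s ⟨n, hn⟩) = T 1 * s ⟨n, hn⟩ := (hsym _).1 hμ0
      have hdom0 : dM (scal (partialE SS 1 n) 0) <
          2 * dM (s ⟨n, hn⟩) + dM (scal (partialE SS 1 n) 1) := by
        rw [hμ0] at hdom
        rw [show (1 - (0 : Fin 2)) = 1 by decide] at hdom
        exact hdom
      obtain ⟨hN0, hS0, hD0⟩ := step (hne 1) (hs0 ⟨n, hn⟩) (hsy 0) (hsy 1) hσs
        (by rw [c0, c1]; ring) hdom0
      refine ⟨?_, ?_, ?_, ?_, ?_, ?_⟩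
      · intro i
        rcases fin2_cases i with rfl | rfl
        · rw [hA]; exact hN0
        · rw [hB]; exact hne 1
      · intro i
        rcases fin2_cases i with rfl | rfl
        · rw [hA]; exact hS0
        · rw [hB]; exact hsy 1
      · intro i
        rcases fin2_cases i with rfl | rfl
        · rw [hA, hD0]
          have h1 := hge 1
          have h2 := htsn.1
          rw [hμ0] at h2
          omega
        · rw [hB]; exact hge 1
      · intro habs; exact absurd habs (Nat.succ_ne_zero n)
      · intro k hk hk1
        have hkn : k = n := by omega
        subst hkn
        have hμ0' : m ⟨k, hk⟩ = 0 := hμ0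
        rw [hμ0', show (1 - (0 : Fin 2)) = 1 by decide]
        rw [hA, hD0, hB]
        have h2 : ((m ⟨k, hk⟩ : Fin 2) : ℤ) ≤ dM (s ⟨k, hk⟩) := htsn.1
        rw [hμ0'] at h2
        omega
      · intro k hk hk1
        have hkn : k = n := by omega
        subst hkn
        have hμ0' : m ⟨k, hk⟩ = 0 := hμ0
        rw [hμ0', show (1 - (0 : Fin 2)) = 1 by decide]
        exact hB
    · -- lower-triangular step, row 1 updated
      have hSSn : SS ⟨n, hn⟩ = lmat (s ⟨n, hn⟩) := (hSS _).2 hμ1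
      have hA : scal (partialE SS 1 (n + 1)) 1 =
          scal (partialE SS 1 n) 1 + sub2 (s ⟨n, hn⟩) * scal (partialE SS 1 n) 0 := by
        rw [hE, hSSn]; exact (scal_lmat_mul _ _).1
      have hB : scal (partialE SS 1 (n + 1)) 0 = scal (partialE SS 1 n) 0 := by
        rw [hE, hSSn]; exact (scal_lmat_mul _ _).2
      have hσs : σ (s ⟨n, hn⟩) = T (-1) * s ⟨n, hn⟩ := (hsym _).2 hμ1
      have hdom1 : dM (scal (partialE SS 1 n) 1) <
          2 * dM (s ⟨n, hn⟩) + dM (scal (partialE SS 1 n) 0) := by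
        rw [hμ1] at hdom
        rw [show (1 - (1 : Fin 2)) = 0 by decide] at hdom
        exact hdom
      obtain ⟨hN0, hS0, hD0⟩ := step (hne 0) (hs0 ⟨n, hn⟩) (hsy 1) (hsy 0) hσs
        (by rw [c0, c1]; ring) hdom1
      refine ⟨?_, ?_, ?_, ?_, ?_, ?_⟩
      · intro i
        rcases fin2_cases i with rfl | rfl
        · rw [hB]; exact hne 0
        · rw [hA]; exact hN0
      · intro i
        rcases fin2_cases i with rfl | rfl
        · rw [hB]; exact hsy 0
        · rw [hA]; exact hS0
      · intro i
        rcases fin2_cases i with rfl | rfl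
        · rw [hB]; exact hge 0
        · rw [hA, hD0]
          have h1 := hge 0
          have h2 := htsn.1
          rw [hμ1] at h2
          omega
      · intro habs; exact absurd habs (Nat.succ_ne_zero n)
      · intro k hk hk1
        have hkn : k = n := by omega
        subst hkn
        have hμ1' : m ⟨k, hk⟩ = 1 := hμ1
        rw [hμ1', show (1 - (1 : Fin 2)) = 0 by decide]
        rw [hA, hD0, hB]
        have h2 : ((m ⟨k, hk⟩ : Fin 2) : ℤ) ≤ dM (s ⟨k, hk⟩) := htsn.1
        rw [hμ1'] at h2
        omega
      · intro k hk hk1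
        have hkn : k = n := by omega
        subst hkn
        have hμ1' : m ⟨k, hk⟩ = 1 := hμ1
        rw [hμ1', show (1 - (1 : Fin 2)) = 0 by decide]
        exact hB

end Stmt11Aux

end Key
/-- cf. Brislawn, GLS-II, Lemma 5.  Support intervals and radii
of the intermediate scalar filters of an irreducible cascade of WS lifting
matrices: `suppint(E⁽ⁿ⁾_i) = [-r⁽ⁿ⁾_i - i, r⁽ⁿ⁾_i - i]`, with
`r⁽ⁿ⁾_{m_n} = r⁽ⁿ⁾_{1-m_n} + 2t⁽ⁿ⁾ - 1` (n ≥ 0),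
`r⁽ⁿ⁾_{1-m_n} = r⁽ⁿ⁻¹⁾_{m_n} + 2t⁽ⁿ⁻¹⁾ - 1` (n ≥ 1), and `r⁽⁰⁾_{1-m₀} = 0`. -/
theorem stmt11 (N : ℕ) (s : Fin N → R2) (m : Fin N → Fin 2) (SS : Fin N → M2)
    (hs0 : ∀ n, s n ≠ 0)
    (hSS : ∀ n, (m n = 0 → SS n = umat (s n)) ∧ (m n = 1 → SS n = lmat (s n)))
    (hsym : ∀ n, (m n = 0 → σ (s n) = T 1 * s n) ∧ (m n = 1 → σ (s n) = T (-1) * s n))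
    (halt : ∀ (i : ℕ) (h : i + 1 < N), m ⟨i + 1, h⟩ ≠ m ⟨i, by omega⟩) :
    ∀ (n : ℕ) (hn : n < N),
      1 ≤ srad (s ⟨n, hn⟩) ∧
      (∀ i : Fin 2,
        sint (scal (partialE SS 1 (n + 1)) i) =
          Set.Icc (-(srad (scal (partialE SS 1 (n + 1)) i)) - (i : ℤ))
                  (srad (scal (partialE SS 1 (n + 1)) i) - (i : ℤ))) ∧
      srad (scal (partialE SS 1 (n + 1)) (m ⟨n, hn⟩)) =
        srad (scal (partialE SS 1 (n + 1)) (1 - m ⟨n, hn⟩))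
          + 2 * srad (s ⟨n, hn⟩) - 1 ∧
      (1 ≤ n →
        srad (scal (partialE SS 1 (n + 1)) (1 - m ⟨n, hn⟩)) =
          srad (scal (partialE SS 1 n) (m ⟨n, hn⟩))
            + 2 * srad (s ⟨n - 1, by omega⟩) - 1) ∧
      (n = 0 → srad (scal (partialE SS 1 (n + 1)) (1 - m ⟨n, hn⟩)) = 0) := by
  intro n hn
  have c0 := Stmt11Aux.coe01.1
  have c1 := Stmt11Aux.coe01.2
  obtain ⟨hne, hsy, hge, -, hrec, hrow⟩ :=
    Stmt11Aux.key N s m SS hs0 hSS hsym halt (n + 1) hn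
  obtain ⟨hneP, hsyP, hgeP, h0P, hrecP, -⟩ :=
    Stmt11Aux.key N s m SS hs0 hSS hsym halt n (Nat.le_of_lt hn)
  have hμb := Stmt11Aux.fin2_bounds (m ⟨n, hn⟩)
  have hts := Stmt11Aux.t_bound s m hs0 hsym ⟨n, hn⟩
  have hsrs := Stmt11Aux.srad_s s m hs0 hsym ⟨n, hn⟩
  refine ⟨?_, ?_, ?_, ?_, ?_⟩
  · -- 1 ≤ srad (s n)
    omega
  · -- support intervals
    intro i
    have h := Stmt11Aux.srad_sint (hne i) (hsy i) (hge i)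
    rw [h.1]
    exact h.2
  · -- recursion at level n
    have h3 := hrec n hn rfl
    have e1 := (Stmt11Aux.srad_sint (hne (m ⟨n, hn⟩)) (hsy _) (hge _)).1
    have e2 := (Stmt11Aux.srad_sint (hne (1 - m ⟨n, hn⟩)) (hsy _) (hge _)).1
    omega
  · -- recursion linking level n to n-1
    intro h1
    obtain ⟨k, rfl⟩ : ∃ k, n = k + 1 := ⟨n - 1, by omega⟩
    have hk : k < N := by omega
    have final : srad (scal (partialE SS 1 (k + 1 + 1)) (1 - m ⟨k + 1, hn⟩)) =
        srad (scal (partialE SS 1 (k + 1)) (m ⟨k + 1, hn⟩))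
          + 2 * srad (s ⟨k, hk⟩) - 1 := by
      have hmk : m ⟨k, hk⟩ = 1 - m ⟨k + 1, hn⟩ :=
        Stmt11Aux.fin2_ne_iff (Ne.symm (halt k hn))
      have hrw : scal (partialE SS 1 (k + 1 + 1)) (1 - m ⟨k + 1, hn⟩) =
          scal (partialE SS 1 (k + 1)) (1 - m ⟨k + 1, hn⟩) := hrow (k + 1) hn rfl
      have h5 := hrecP k hk rfl
      rw [hmk, Stmt11Aux.fin2_one_sub_one_sub] at h5
      have es := Stmt11Aux.srad_s s m hs0 hsym ⟨k, hk⟩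
      rw [hmk] at es
      have eA := (Stmt11Aux.srad_sint (hneP (1 - m ⟨k + 1, hn⟩)) (hsyP _) (hgeP _)).1
      have eB := (Stmt11Aux.srad_sint (hneP (m ⟨k + 1, hn⟩)) (hsyP _) (hgeP _)).1
      have hνμ := Stmt11Aux.fin2_one_sub_coe (m ⟨k + 1, hn⟩)
      have hμb' := Stmt11Aux.fin2_bounds (m ⟨k + 1, hn⟩)
      rw [hrw]
      omega
    exact final
  · -- base case n = 0
    intro h0
    subst h0
    have hrw : scal (partialE SS 1 1) (1 - m ⟨0, hn⟩) =
        scal (partialE SS 1 0) (1 - m ⟨0, hn⟩) := hrow 0 hn rfl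
    have e := (Stmt11Aux.srad_sint (hneP (1 - m ⟨0, hn⟩)) (hsyP _) (hgeP _)).1
    have d0 := h0P rfl (1 - m ⟨0, hn⟩)
    rw [hrw]
    omega
end
end
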